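/- arXiv:1901.03521 — 5 statements merged into one kernel-verified Lean document; each statement's English description precedes it below -/
import Mathlib

section
/- If {μ_n} is a sequence of finite Borel measures on [0,∞) and L: [0,∞) → ℝ is a continuous function such that L_{μ_n}(λ) → L(λ) for every λ ≥ 0, then there exists a finite measure μ on [0,∞) with L_μ = L and μ_n → μ weakly. -/
open MeasureTheory Filter Set

namespace LaplaceCont

/-- ramp: 1 on `(-∞,a]`, 0 on `[b,∞)`, linear between. -/
noncomputable def gfun (a b t : ℝ) : ℝ := max 0 (min 1 ((b - t) / (b - a)))

lemma gfun_nonneg (a b t : ℝ) : 0 ≤ gfun a b t := le_max_left _ _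

lemma gfun_le_one (a b t : ℝ) : gfun a b t ≤ 1 :=
  max_le (by norm_num) (min_le_left _ _)

lemma gfun_of_le {a b t : ℝ} (hab : a < b) (h : t ≤ a) : gfun a b t = 1 := by
  have hba : 0 < b - a := by linarith
  have : (1:ℝ) ≤ (b - t) / (b - a) := (le_div_iff₀ hba).2 (by linarith)
  simp [gfun, min_eq_left this]

lemma gfun_of_ge {a b t : ℝ} (hab : a < b) (h : b ≤ t) : gfun a b t = 0 := by
  have hba : 0 < b - a := by linarith
  have h1 : (b - t) / (b - a) ≤ 0 := div_nonpos_of_nonpos_of_nonneg (by linarith) hba.le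
  have : min 1 ((b - t) / (b - a)) ≤ 0 := le_trans (min_le_right _ _) h1
  simp [gfun, max_eq_left this]

lemma gfun_continuous {a b : ℝ} (hab : a < b) : Continuous (gfun a b) := by
  have : Continuous fun t : ℝ => (b - t) / (b - a) :=
    (continuous_const.sub continuous_id).div_const _
  exact continuous_const.max (continuous_const.min this)

/-- monotonicity in parameters in the "disjoint" case. -/
lemma gfun_le_gfun {a b a' b' : ℝ} (hab : a < b) (ha'b' : a' < b') (h : b ≤ a') (t : ℝ) :
    gfun a b t ≤ gfun a' b' t := by
  rcases le_or_gt t a' with ht | ht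
  · rw [gfun_of_le ha'b' ht]; exact gfun_le_one _ _ _
  · rw [gfun_of_ge hab (le_trans h ht.le)]; exact gfun_nonneg _ _ _


noncomputable def expm (x : NNReal) : ℝ := Real.exp (-(x:ℝ))

lemma expm_mem (x : NNReal) : expm x ∈ Set.Ioc (0:ℝ) 1 :=
  ⟨Real.exp_pos _, Real.exp_le_one_iff.2 (by simp [neg_nonpos])⟩

lemma continuous_expm : Continuous expm :=
  Real.continuous_exp.comp (NNReal.continuous_coe.neg)

section SingleMeasure

variable (P : Measure NNReal) [IsFiniteMeasure P]

/-- The basic integral functional. -/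
noncomputable def T (g : ℝ → ℝ) : ℝ := ∫ x, g (expm x) ∂P

lemma exists_bound {g : ℝ → ℝ} (hg : Continuous g) :
    ∃ C : ℝ, 0 ≤ C ∧ ∀ t ∈ Set.Icc (0:ℝ) 1, ‖g t‖ ≤ C := by
  obtain ⟨C, hC⟩ := isCompact_Icc.exists_bound_of_continuousOn
    (hg.continuousOn (s := Set.Icc (0:ℝ) 1))
  refine ⟨max C 0, le_max_right _ _, fun t ht => le_trans (hC t ht) (le_max_left _ _)⟩

lemma integrable_comp {g : ℝ → ℝ} (hg : Continuous g) :
    Integrable (fun x : NNReal => g (expm x)) P := by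
  obtain ⟨C, _, hC⟩ := exists_bound hg
  refine ⟨(hg.comp continuous_expm).aestronglyMeasurable, ?_⟩
  exact HasFiniteIntegral.of_bounded (C := C)
    (ae_of_all _ fun x => hC _ (Set.Ioc_subset_Icc_self (expm_mem x)))

lemma T_mono {g g' : ℝ → ℝ} (hg : Continuous g) (hg' : Continuous g')
    (hle : ∀ t ∈ Set.Ioc (0:ℝ) 1, g t ≤ g' t) : T P g ≤ T P g' :=
  integral_mono (integrable_comp P hg) (integrable_comp P hg')
    (fun x => hle _ (expm_mem x))

lemma T_const (c : ℝ) : T P (fun _ => c) = (P Set.univ).toReal * c := by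
  simp [T, integral_const, smul_eq_mul, Measure.real]

lemma T_nonneg {g : ℝ → ℝ} (hle : ∀ t ∈ Set.Ioc (0:ℝ) 1, 0 ≤ g t) : 0 ≤ T P g :=
  integral_nonneg (fun x => hle _ (expm_mem x))

lemma T_dist_le {g g' : ℝ → ℝ} (hg : Continuous g) (hg' : Continuous g') {c : ℝ}
    (hb : ∀ t ∈ Set.Ioc (0:ℝ) 1, ‖g t - g' t‖ ≤ c) :
    ‖T P g - T P g'‖ ≤ c * (P Set.univ).toReal := by
  rw [T, T, ← integral_sub (integrable_comp P hg) (integrable_comp P hg')]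
  exact norm_integral_le_of_norm_le_const (ae_of_all _ fun x => hb _ (expm_mem x))

end SingleMeasure

section Sequence

variable (μ : ℕ → Measure NNReal) [∀ n, IsFiniteMeasure (μ n)] (L : ℝ → ℝ)

/-- total masses -/
noncomputable def M (n : ℕ) : ℝ := ((μ n) Set.univ).toReal

variable (h : ∀ l : ℝ, 0 ≤ l →
      Tendsto (fun n => ∫ x, Real.exp (-l * (x : ℝ)) ∂(μ n)) atTop (nhds (L l)))

include h in
lemma tendsto_M : Tendsto (M μ) atTop (nhds (L 0)) := by
  have := h 0 le_rfl
  simp [integral_const, smul_eq_mul, Measure.real] at this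
  exact this

include h in
lemma L0_nonneg : 0 ≤ L 0 :=
  ge_of_tendsto' (tendsto_M μ L h) (fun n => ENNReal.toReal_nonneg)

include h in
lemma exists_massBound : ∃ B : ℝ, 0 < B ∧ ∀ n, M μ n ≤ B := by
  have hb : BddAbove (Set.range (M μ)) := (tendsto_M μ L h).bddAbove_range
  obtain ⟨B, hB⟩ := hb
  exact ⟨B + 1, lt_of_le_of_lt (le_trans ENNReal.toReal_nonneg
      (hB (Set.mem_range_self 0))) (by linarith), fun n =>
    le_trans (hB (Set.mem_range_self n)) (by linarith)⟩

lemma T_exp_rpow {lam : ℝ} (hlam : 0 ≤ lam) (n : ℕ) :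
    T (μ n) (fun t => t ^ lam) = ∫ x, Real.exp (-lam * (x : ℝ)) ∂(μ n) := by
  refine integral_congr_ae (ae_of_all _ fun x => ?_)
  show (Real.exp (-(x:ℝ))) ^ lam = Real.exp (-lam * (x:ℝ))
  rw [Real.rpow_def_of_pos (Real.exp_pos _), Real.log_exp]
  ring_nf

lemma T_pow (k : ℕ) (n : ℕ) :
    T (μ n) (fun t => t ^ k) = ∫ x, Real.exp (-(k:ℝ) * (x : ℝ)) ∂(μ n) := by
  refine integral_congr_ae (ae_of_all _ fun x => ?_)
  show (Real.exp (-(x:ℝ))) ^ k = Real.exp (-(k:ℝ) * (x:ℝ))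
  rw [← Real.exp_nat_mul]
  ring_nf

include h in
lemma tendsto_T_poly (p : Polynomial ℝ) :
    Tendsto (fun n => T (μ n) (fun t => p.eval t)) atTop
      (nhds (p.sum fun k a => a * L k)) := by
  induction p using Polynomial.induction_on' with
  | add p q hp hq =>
    have : (fun n => T (μ n) fun t => (p + q).eval t)
        = fun n => (T (μ n) fun t => p.eval t) + (T (μ n) fun t => q.eval t) := by
      funext n
      simp only [T, Polynomial.eval_add]
      exact integral_add (integrable_comp _ p.continuous) (integrable_comp _ q.continuous)
    rw [this, Polynomial.sum_add_index p q _ (fun i => zero_mul (L i))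
      (fun a b₁ b₂ => add_mul b₁ b₂ (L a))]
    exact hp.add hq
  | monomial k a =>
    have : (fun n => T (μ n) fun t => (Polynomial.monomial k a).eval t)
        = fun n => a * ∫ x, Real.exp (-(k:ℝ) * (x : ℝ)) ∂(μ n) := by
      funext n
      simp only [T, Polynomial.eval_monomial]
      rw [← integral_const_mul]
      refine integral_congr_ae (ae_of_all _ fun x => ?_)
      show a * (Real.exp (-(x:ℝ))) ^ k = a * Real.exp (-(k:ℝ) * (x:ℝ))
      rw [← Real.exp_nat_mul]
      ring_nf
    rw [this, Polynomial.sum_monomial_index a _ (zero_mul (L k))]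
    exact ((h k (Nat.cast_nonneg k)).const_mul a)

include h in
lemma exists_T_lim {g : ℝ → ℝ} (hg : Continuous g) :
    ∃ c : ℝ, Tendsto (fun n => T (μ n) g) atTop (nhds c) := by
  obtain ⟨B, hB0, hB⟩ := exists_massBound μ L h
  apply cauchySeq_tendsto_of_complete
  rw [Metric.cauchySeq_iff]
  intro ε hε
  have hε4B : 0 < ε / (4 * B) := by positivity
  obtain ⟨p, hp⟩ := exists_polynomial_near_of_continuousOn 0 1 g hg.continuousOn _ hε4B
  have hcauchy : CauchySeq (fun n => T (μ n) fun t => p.eval t) :=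
    (tendsto_T_poly μ L h p).cauchySeq
  rw [Metric.cauchySeq_iff] at hcauchy
  obtain ⟨N, hN⟩ := hcauchy (ε/2) (by positivity)
  refine ⟨N, fun m hm n hn => ?_⟩
  have key : ∀ j, ‖T (μ j) g - T (μ j) (fun t => p.eval t)‖ ≤ ε/4 := by
    intro j
    have := T_dist_le (μ j) hg p.continuous (c := ε / (4*B))
      (fun t ht => le_of_lt (by
        rw [Real.norm_eq_abs, abs_sub_comm]
        exact hp t (Set.Ioc_subset_Icc_self ht)))
    refine le_trans this ?_
    calc ε / (4*B) * (μ j Set.univ).toReal ≤ ε / (4*B) * B :=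
          mul_le_mul_of_nonneg_left (hB j) hε4B.le
      _ = ε/4 := by field_simp
  have d1 : dist (T (μ m) g) (T (μ m) fun t => p.eval t) ≤ ε/4 := by
    rw [dist_eq_norm]; exact key m
  have d3 : dist (T (μ n) (fun t => p.eval t)) (T (μ n) g) ≤ ε/4 := by
    rw [dist_comm, dist_eq_norm]; exact key n
  have d2 := hN m hm n hn
  calc dist (T (μ m) g) (T (μ n) g)
      ≤ dist (T (μ m) g) (T (μ m) fun t => p.eval t) +
        dist (T (μ m) (fun t => p.eval t)) (T (μ n) fun t => p.eval t) +
        dist (T (μ n) (fun t => p.eval t)) (T (μ n) g) := dist_triangle4 _ _ _ _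
    _ < ε := by linarith

/-- The limit functional. -/
noncomputable def II (g : ℝ → ℝ) : ℝ := limUnder atTop (fun n => T (μ n) g)

include h in
lemma tendsto_T_II {g : ℝ → ℝ} (hg : Continuous g) :
    Tendsto (fun n => T (μ n) g) atTop (nhds (II μ g)) := by
  obtain ⟨c, hc⟩ := exists_T_lim μ L h hg
  rwa [II, hc.limUnder_eq]

include h in
lemma II_mono {g g' : ℝ → ℝ} (hg : Continuous g) (hg' : Continuous g')
    (hle : ∀ t ∈ Set.Ioc (0:ℝ) 1, g t ≤ g' t) : II μ g ≤ II μ g' :=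
  le_of_tendsto_of_tendsto' (tendsto_T_II μ L h hg) (tendsto_T_II μ L h hg')
    (fun n => T_mono (μ n) hg hg' hle)

include h in
lemma II_nonneg {g : ℝ → ℝ} (hle : ∀ t ∈ Set.Ioc (0:ℝ) 1, 0 ≤ g t)
    (hg : Continuous g) : 0 ≤ II μ g :=
  ge_of_tendsto' (tendsto_T_II μ L h hg) (fun n => T_nonneg (μ n) hle)

include h in
lemma II_gfun_le_L0 {a b : ℝ} (hab : a < b) : II μ (gfun a b) ≤ L 0 := by
  refine le_of_tendsto_of_tendsto' (tendsto_T_II μ L h (gfun_continuous hab))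
    (tendsto_M μ L h) (fun n => ?_)
  have := T_mono (μ n) (gfun_continuous hab) continuous_const
    (fun t _ => gfun_le_one a b t)
  rwa [T_const, mul_one] at this

/-- The pre-Stieltjes function. -/
noncomputable def F (t : ℝ) : ℝ :=
  sInf ((fun p : ℚ × ℚ => II μ (gfun p.1 p.2)) ''
    {p : ℚ × ℚ | t < (p.1:ℝ) ∧ p.1 < p.2})

lemma F_set_nonempty (t : ℝ) :
    ((fun p : ℚ × ℚ => II μ (gfun p.1 p.2)) ''
      {p : ℚ × ℚ | t < (p.1:ℝ) ∧ p.1 < p.2}).Nonempty := by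
  obtain ⟨q, hq⟩ := exists_rat_gt t
  exact ⟨_, ⟨(q, q+1), ⟨hq, by norm_num⟩, rfl⟩⟩

include h in
lemma F_set_bddBelow (t : ℝ) :
    BddBelow ((fun p : ℚ × ℚ => II μ (gfun p.1 p.2)) ''
      {p : ℚ × ℚ | t < (p.1:ℝ) ∧ p.1 < p.2}) := by
  refine ⟨0, fun y hy => ?_⟩
  obtain ⟨⟨q, r⟩, ⟨_, hqr⟩, rfl⟩ := hy
  have hqr' : (q:ℝ) < r := by exact_mod_cast hqr
  exact II_nonneg μ L h (fun t _ => gfun_nonneg _ _ t) (gfun_continuous hqr')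

include h in
lemma F_le_II {t : ℝ} {q r : ℚ} (htq : t < q) (hqr : q < r) :
    F μ t ≤ II μ (gfun q r) :=
  csInf_le (F_set_bddBelow μ L h t) ⟨(q, r), ⟨htq, hqr⟩, rfl⟩

include h in
lemma II_le_F {a b : ℝ} (hab : a < b) {s : ℝ} (hbs : b ≤ s) :
    II μ (gfun a b) ≤ F μ s := by
  refine le_csInf (F_set_nonempty μ s) (fun y hy => ?_)
  obtain ⟨⟨q, r⟩, ⟨hsq, hqr⟩, rfl⟩ := hy
  have hqr' : (q:ℝ) < r := by exact_mod_cast hqr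
  exact II_mono μ L h (gfun_continuous hab) (gfun_continuous hqr')
    (fun t _ => gfun_le_gfun hab hqr' (le_trans hbs hsq.le) t)

include h in
lemma F_nonneg (t : ℝ) : 0 ≤ F μ t := by
  refine le_csInf (F_set_nonempty μ t) (fun y hy => ?_)
  obtain ⟨⟨q, r⟩, ⟨_, hqr⟩, rfl⟩ := hy
  have hqr' : (q:ℝ) < r := by exact_mod_cast hqr
  exact II_nonneg μ L h (fun t _ => gfun_nonneg _ _ t) (gfun_continuous hqr')

include h in
lemma F_le_L0 (t : ℝ) : F μ t ≤ L 0 := by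
  obtain ⟨q, hq⟩ := exists_rat_gt t
  refine le_trans (F_le_II μ L h hq (lt_add_one q)) (II_gfun_le_L0 μ L h ?_)
  exact_mod_cast lt_add_one q

include h in
lemma F_mono : Monotone (F μ) := by
  intro s t hst
  refine csInf_le_csInf (F_set_bddBelow μ L h s) (F_set_nonempty μ t)
    (Set.image_mono ?_)
  exact fun p hp => ⟨lt_of_le_of_lt hst hp.1, hp.2⟩

include h in
lemma F_eq_zero {t : ℝ} (ht : t < 0) : F μ t = 0 := by
  refine le_antisymm ?_ (F_nonneg μ L h t)
  obtain ⟨q, hq1, hq2⟩ := exists_rat_btwn ht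
  obtain ⟨r, hr1, hr2⟩ := exists_rat_btwn hq2
  have hqr : (q:ℝ) < r := by exact_mod_cast hr1
  refine le_trans (F_le_II μ L h hq1 (by exact_mod_cast hr1)) ?_
  have : ∀ n, T (μ n) (gfun q r) = 0 := by
    intro n
    have : ∀ x : NNReal, gfun q r (expm x) = 0 := fun x =>
      gfun_of_ge hqr (le_trans hr2.le (expm_mem x).1.le)
    simp only [T]
    rw [integral_congr_ae (ae_of_all _ fun x => this x), integral_zero]
  have h0 : Tendsto (fun n => T (μ n) (gfun q r)) atTop (nhds 0) := by
    simp only [this]; exact tendsto_const_nhds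
  exact le_of_eq (tendsto_nhds_unique (tendsto_T_II μ L h (gfun_continuous hqr)) h0)

include h in
lemma T_gfun_eq_M {a b : ℝ} (hab : a < b) (h1 : 1 ≤ a) (n : ℕ) :
    T (μ n) (gfun a b) = M μ n := by
  have : ∀ x : NNReal, gfun a b (expm x) = 1 := fun x =>
    gfun_of_le hab (le_trans (expm_mem x).2 h1)
  simp only [T]
  rw [integral_congr_ae (ae_of_all _ fun x => this x), integral_const]
  simp [M, smul_eq_mul, Measure.real]

include h in
lemma II_gfun_eq_L0 {a b : ℝ} (hab : a < b) (h1 : 1 ≤ a) :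
    II μ (gfun a b) = L 0 := by
  refine tendsto_nhds_unique (tendsto_T_II μ L h (gfun_continuous hab)) ?_
  have : (fun n => T (μ n) (gfun a b)) = M μ := by
    funext n; exact T_gfun_eq_M μ L h hab h1 n
  rw [this]; exact tendsto_M μ L h

include h in
lemma F_eq_L0 {t : ℝ} (ht : 1 ≤ t) : F μ t = L 0 := by
  refine le_antisymm (F_le_L0 μ L h t) ?_
  refine le_csInf (F_set_nonempty μ t) (fun y hy => ?_)
  obtain ⟨⟨q, r⟩, ⟨htq, hqr⟩, rfl⟩ := hy
  have hqr' : (q:ℝ) < r := by exact_mod_cast hqr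
  exact le_of_eq (II_gfun_eq_L0 μ L h hqr' (le_trans ht htq.le)).symm

include h in
lemma F_right_continuous (x : ℝ) : ContinuousWithinAt (F μ) (Set.Ici x) x := by
  rw [Metric.continuousWithinAt_iff]
  intro ε hε
  have hlt : F μ x < F μ x + ε := by linarith
  obtain ⟨y, hy, hyε⟩ := exists_lt_of_csInf_lt (F_set_nonempty μ x) hlt
  obtain ⟨⟨q, r⟩, ⟨hxq, hqr⟩, rfl⟩ := hy
  refine ⟨(q:ℝ) - x, by linarith, fun t ht hd => ?_⟩
  rw [Real.dist_eq] at hd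
  have htq : t < q := by
    rcases abs_lt.1 hd with ⟨_, h2⟩
    have : t - x < (q:ℝ) - x := h2
    linarith
  have hFt : F μ t ≤ II μ (gfun q r) := F_le_II μ L h htq hqr
  have hxt : F μ x ≤ F μ t := F_mono μ L h ht
  rw [Real.dist_eq, abs_lt]
  constructor <;> linarith

include h in
lemma II_rpow {lam : ℝ} (hlam : 0 < lam) :
    Tendsto (fun n => T (μ n) (fun t => t ^ lam)) atTop (nhds (L lam)) := by
  have : (fun n => T (μ n) (fun t => t ^ lam))
      = fun n => ∫ x, Real.exp (-lam * (x : ℝ)) ∂(μ n) := by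
    funext n; exact T_exp_rpow (μ := μ) hlam.le n
  rw [this]; exact h lam hlam.le

lemma continuous_rpow {lam : ℝ} (hlam : 0 < lam) :
    Continuous (fun t : ℝ => t ^ lam) := by
  rw [continuous_iff_continuousAt]
  exact fun x => Real.continuousAt_rpow_const x lam (Or.inr hlam.le)

include h in
lemma F_zero_eq (hL : ContinuousOn L (Set.Ici 0)) : F μ 0 = 0 := by
  refine le_antisymm ?_ (F_nonneg μ L h 0)
  have key : ∀ ε > (0:ℝ), F μ 0 ≤ ε := by
    intro ε hε
    -- continuity of L at 0 within Ici 0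
    have hc : ContinuousWithinAt L (Set.Ici 0) 0 := hL 0 Set.self_mem_Ici
    rw [Metric.continuousWithinAt_iff] at hc
    obtain ⟨δ, hδ, hδ'⟩ := hc (ε/2) (by linarith)
    set lam := δ/2 with hlam_def
    have hlam : 0 < lam := by positivity
    have hLlam : L 0 - L lam < ε/2 := by
      have hmem : lam ∈ Set.Ici (0:ℝ) := hlam.le
      have hdist : dist lam 0 < δ := by
        rw [Real.dist_eq, sub_zero, abs_of_pos hlam, hlam_def]; linarith
      have := hδ' hmem hdist
      rw [Real.dist_eq] at this
      rcases abs_lt.1 this with ⟨h1, _⟩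
      linarith
    -- choose small rationals
    set F0 := F μ 0 with hF0def
    have hF0 : 0 ≤ F0 := F_nonneg μ L h 0
    set θ : ℝ := min (1/2) ((ε/(2*(F0+1))) ^ lam⁻¹) with hθdef
    have hθpos : 0 < θ :=
      lt_min (by norm_num) (Real.rpow_pos_of_pos (by positivity) _)
    obtain ⟨r, hr0, hrθ⟩ := exists_rat_btwn hθpos
    obtain ⟨q, hq0, hqr⟩ := exists_rat_btwn hr0
    have hq0' : (0:ℝ) < q := hq0
    have hqr' : (q:ℝ) < r := hqr
    have hr1 : (r:ℝ) < 1 := lt_of_lt_of_le hrθ (le_trans (min_le_left _ _) (by norm_num))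
    have hrpow : (r:ℝ) ^ lam ≤ ε/(2*(F0+1)) := by
      have h1 : (r:ℝ) ^ lam ≤ θ ^ lam :=
        Real.rpow_le_rpow (le_of_lt (lt_trans hq0 hqr)) hrθ.le hlam.le
      have h2 : θ ^ lam ≤ ((ε/(2*(F0+1))) ^ lam⁻¹) ^ lam :=
        Real.rpow_le_rpow hθpos.le (min_le_right _ _) hlam.le
      have h3 : ((ε/(2*(F0+1))) ^ lam⁻¹) ^ lam = ε/(2*(F0+1)) := by
        rw [← Real.rpow_mul (by positivity), inv_mul_cancel₀ hlam.ne', Real.rpow_one]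
      calc (r:ℝ) ^ lam ≤ ((ε/(2*(F0+1))) ^ lam⁻¹) ^ lam := le_trans h1 h2
        _ = ε/(2*(F0+1)) := h3
    have hrlam_nonneg : 0 ≤ 1 - (r:ℝ) ^ lam := by
      have : (r:ℝ) ^ lam ≤ 1 := Real.rpow_le_one hr0.le hr1.le hlam.le
      linarith
    -- pointwise bound and limit
    have hpt : ∀ n, (1 - (r:ℝ)^lam) * T (μ n) (gfun q r)
        ≤ T (μ n) (fun t => 1 - t ^ lam) := by
      intro n
      have heq : (1 - (r:ℝ)^lam) * T (μ n) (gfun q r)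
          = T (μ n) (fun t => (1 - (r:ℝ)^lam) * gfun q r t) := by
        simp only [T, ← integral_const_mul]
      rw [heq]
      refine T_mono (μ n) (continuous_const.mul (gfun_continuous hqr'))
        ((continuous_const.sub (continuous_rpow hlam))) (fun t ht => ?_)
      rcases le_or_gt (r:ℝ) t with hrt | htr
      · rw [gfun_of_ge hqr' hrt, mul_zero, sub_nonneg]
        exact Real.rpow_le_one ht.1.le ht.2 hlam.le
      · have h1 : (1 - (r:ℝ)^lam) * gfun q r t ≤ 1 - (r:ℝ)^lam :=
          mul_le_of_le_one_right hrlam_nonneg (gfun_le_one _ _ _)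
        have h2 : t ^ lam ≤ (r:ℝ) ^ lam :=
          Real.rpow_le_rpow ht.1.le htr.le hlam.le
        linarith
    have hlim : (1 - (r:ℝ)^lam) * II μ (gfun q r) ≤ L 0 - L lam := by
      refine le_of_tendsto_of_tendsto'
        ((tendsto_T_II μ L h (gfun_continuous hqr')).const_mul _) ?_ hpt
      have : (fun n => T (μ n) (fun t => 1 - t ^ lam))
          = fun n => M μ n - T (μ n) (fun t => t ^ lam) := by
        funext n
        simp only [T]
        rw [integral_sub (integrable_comp _ continuous_const)
          (integrable_comp _ (continuous_rpow hlam))]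
        simp [M, integral_const, smul_eq_mul, Measure.real]
      rw [this]
      exact (tendsto_M μ L h).sub (II_rpow μ L h hlam)
    have hF0q : F0 ≤ II μ (gfun q r) := F_le_II μ L h hq0' (by exact_mod_cast hqr)
    have step : (1 - (r:ℝ)^lam) * F0 ≤ L 0 - L lam :=
      le_trans (mul_le_mul_of_nonneg_left hF0q hrlam_nonneg) hlim
    have final : F0 ≤ (L 0 - L lam) + (r:ℝ)^lam * F0 := by nlinarith
    have hbound : (r:ℝ)^lam * F0 ≤ ε/2 := by
      calc (r:ℝ)^lam * F0 ≤ (ε/(2*(F0+1))) * F0 := by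
            refine mul_le_mul_of_nonneg_right hrpow hF0
        _ ≤ ε/2 := by
            rw [div_mul_eq_mul_div, div_le_div_iff₀ (by positivity) (by norm_num)]
            nlinarith
    linarith
  by_contra hne
  push_neg at hne
  have := key (F μ 0 / 2) (by linarith)
  linarith

include h in
lemma F_tendsto_atBot : Tendsto (F μ) atBot (nhds 0) := by
  refine Tendsto.congr' ?_ (tendsto_const_nhds (α := ℝ))
  filter_upwards [eventually_lt_atBot (0:ℝ)] with t ht
  exact (F_eq_zero μ L h ht).symm

include h in
lemma F_tendsto_atTop : Tendsto (F μ) atTop (nhds (L 0)) := by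
  refine Tendsto.congr' ?_ (tendsto_const_nhds (α := ℝ))
  filter_upwards [eventually_ge_atTop (1:ℝ)] with t ht
  exact (F_eq_L0 μ L h ht).symm

include h in
noncomputable def FS : StieltjesFunction ℝ :=
  ⟨F μ, F_mono μ L h, F_right_continuous μ L h⟩

include h in
lemma FS_apply (t : ℝ) : FS μ L h t = F μ t := rfl

include h in
noncomputable def NU : Measure ℝ := (FS μ L h).measure

include h in
lemma NU_Iic (x : ℝ) : NU μ L h (Set.Iic x) = ENNReal.ofReal (F μ x) := by
  rw [NU, StieltjesFunction.measure_Iic _ (F_tendsto_atBot μ L h) x, FS_apply, sub_zero]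

include h in
lemma NU_univ : NU μ L h Set.univ = ENNReal.ofReal (L 0) := by
  rw [NU, StieltjesFunction.measure_univ _ (F_tendsto_atBot μ L h)
    (F_tendsto_atTop μ L h), sub_zero]

include h in
lemma NU_finite : IsFiniteMeasure (NU μ L h) := by
  constructor
  rw [NU_univ μ L h]
  exact ENNReal.ofReal_lt_top

include h in
lemma NU_Iio_zero : NU μ L h (Set.Iio 0) = 0 := by
  have hsub : Set.Iio (0:ℝ) ⊆ ⋃ n : ℕ, Set.Iic (-(1/(n+1) : ℝ)) := by
    intro t ht
    have ht' : t < 0 := ht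
    obtain ⟨n, hn⟩ := exists_nat_one_div_lt (show (0:ℝ) < -t by linarith)
    exact Set.mem_iUnion.2 ⟨n, by simp only [Set.mem_Iic]; push_cast; linarith⟩
  refine measure_mono_null hsub (measure_iUnion_null fun n => ?_)
  have hneg : (-(1/(n+1):ℝ)) < 0 := by
    have : (0:ℝ) < 1/(n+1) := by positivity
    linarith
  rw [NU_Iic μ L h, F_eq_zero μ L h hneg, ENNReal.ofReal_zero]

include h in
lemma NU_Ioi_one : NU μ L h (Set.Ioi 1) = 0 := by
  have : Set.Ioi (1:ℝ) = (Set.Iic (1:ℝ))ᶜ := by simp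
  rw [this, measure_compl measurableSet_Iic (by
    rw [NU_Iic μ L h]; exact ENNReal.ofReal_ne_top),
    NU_univ μ L h, NU_Iic μ L h, F_eq_L0 μ L h le_rfl, tsub_self]

include h in
lemma NU_ae : ∀ᵐ t ∂(NU μ L h), t ∈ Set.Icc (0:ℝ) 1 := by
  have hc : NU μ L h (Set.Icc (0:ℝ) 1)ᶜ = 0 := by
    have : (Set.Icc (0:ℝ) 1)ᶜ ⊆ Set.Iio 0 ∪ Set.Ioi 1 := by
      intro t ht
      simp only [Set.mem_compl_iff, Set.mem_Icc, not_and_or, not_le] at ht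
      rcases ht with h1 | h1
      · exact Or.inl h1
      · exact Or.inr h1
    refine measure_mono_null this ?_
    exact measure_union_null (NU_Iio_zero μ L h) (NU_Ioi_one μ L h)
  filter_upwards [measure_eq_zero_iff_ae_notMem.mp hc] with t ht
  simpa using ht

include h in
lemma NU_restrict : (NU μ L h).restrict (Set.Icc 0 1) = NU μ L h :=
  Measure.restrict_eq_self_of_ae_mem (NU_ae μ L h)

include h in
lemma NU_integrable {g : ℝ → ℝ} (hg : Continuous g) : Integrable g (NU μ L h) := by
  have : IsFiniteMeasure (NU μ L h) := NU_finite μ L h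
  have h1 : Integrable g ((NU μ L h).restrict (Set.Icc 0 1)) :=
    hg.continuousOn.integrableOn_compact isCompact_Icc
  rwa [NU_restrict μ L h] at h1

include h in
lemma integral_gfun_le {a b : ℝ} (hab : a < b) :
    ∫ t, gfun a b t ∂(NU μ L h) ≤ F μ b := by
  have : IsFiniteMeasure (NU μ L h) := NU_finite μ L h
  have hle : ∀ t, gfun a b t ≤ Set.indicator (Set.Iic b) (fun _ => (1:ℝ)) t := by
    intro t
    rcases le_or_gt t b with ht | ht
    · rw [Set.indicator_of_mem (Set.mem_Iic.2 ht)]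
      exact gfun_le_one _ _ _
    · rw [Set.indicator_of_notMem (by simp [Set.mem_Iic]; linarith),
        gfun_of_ge hab ht.le]
  calc ∫ t, gfun a b t ∂(NU μ L h)
      ≤ ∫ t, Set.indicator (Set.Iic b) (fun _ => (1:ℝ)) t ∂(NU μ L h) :=
        integral_mono (NU_integrable μ L h (gfun_continuous hab))
          ((integrable_const (1:ℝ)).indicator measurableSet_Iic) hle
    _ = F μ b := by
        rw [integral_indicator_const _ measurableSet_Iic, Measure.real, NU_Iic μ L h,
          ENNReal.toReal_ofReal (F_nonneg μ L h b), smul_eq_mul, mul_one]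

include h in
lemma le_integral_gfun {a b : ℝ} (hab : a < b) :
    F μ a ≤ ∫ t, gfun a b t ∂(NU μ L h) := by
  have : IsFiniteMeasure (NU μ L h) := NU_finite μ L h
  have hle : ∀ t, Set.indicator (Set.Iic a) (fun _ => (1:ℝ)) t ≤ gfun a b t := by
    intro t
    rcases le_or_gt t a with ht | ht
    · rw [Set.indicator_of_mem (Set.mem_Iic.2 ht), gfun_of_le hab ht]
    · rw [Set.indicator_of_notMem (by simp [Set.mem_Iic]; linarith)]
      exact gfun_nonneg _ _ _
  calc F μ a
      = ∫ t, Set.indicator (Set.Iic a) (fun _ => (1:ℝ)) t ∂(NU μ L h) := by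
        rw [integral_indicator_const _ measurableSet_Iic, Measure.real, NU_Iic μ L h,
          ENNReal.toReal_ofReal (F_nonneg μ L h a), smul_eq_mul, mul_one]
    _ ≤ ∫ t, gfun a b t ∂(NU μ L h) :=
        integral_mono ((integrable_const (1:ℝ)).indicator measurableSet_Iic)
          (NU_integrable μ L h (gfun_continuous hab)) hle

lemma abel_sum (a D : ℕ → ℝ) : ∀ K : ℕ, ∑ j ∈ Finset.range (K+1), a j * (D (j+1) - D j)
    = a K * D (K+1) - a 0 * D 0 - ∑ j ∈ Finset.range K, (a (j+1) - a j) * D (j+1) := by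
  intro K
  induction K with
  | zero => simp; ring
  | succ n ih =>
    rw [Finset.sum_range_succ, ih, Finset.sum_range_succ]
    ring

set_option maxHeartbeats 2000000 in
include h in
lemma tendsto_T_integral {g : ℝ → ℝ} (hg : Continuous g) :
    Tendsto (fun n => T (μ n) g) atTop (nhds (∫ t, g t ∂(NU μ L h))) := by
  have fin : IsFiniteMeasure (NU μ L h) := NU_finite μ L h
  have hL0 : 0 ≤ L 0 := L0_nonneg μ L h
  obtain ⟨c, hc⟩ := exists_T_lim μ L h hg
  have hceq : c = ∫ t, g t ∂(NU μ L h) := by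
    refine eq_of_forall_dist_le (fun ε hε => ?_)
    set ε' := ε / (4 * (L 0 + 1)) with hε'def
    have hε' : 0 < ε' := by positivity
    -- uniform continuity on [-4,4]
    have huc : UniformContinuousOn g (Set.Icc (-4:ℝ) 4) :=
      (isCompact_Icc).uniformContinuousOn_of_continuous hg.continuousOn
    rw [Metric.uniformContinuousOn_iff] at huc
    obtain ⟨δ, hδ, hδ'⟩ := huc ε' hε'
    -- choose m
    obtain ⟨m, hm⟩ := exists_nat_gt (max 1 (2/δ))
    have hm1 : (1:ℝ) ≤ m := le_of_lt (lt_of_le_of_lt (le_max_left _ _) hm)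
    have hm2 : 2/δ < m := lt_of_le_of_lt (le_max_right _ _) hm
    have hmpos : (0:ℝ) < m := by linarith
    have hmesh : (1:ℝ)/m < δ := by
      rw [div_lt_iff₀ hmpos]
      rw [div_lt_iff₀ hδ] at hm2
      nlinarith
    -- the partition
    set q : ℕ → ℚ := fun i => (i:ℚ)/m - 2/m with hqdef
    have hqcast : ∀ i : ℕ, ((q i : ℚ) : ℝ) = (i:ℝ)/m - 2/m := by
      intro i; rw [hqdef]; push_cast; ring
    have hqlt : ∀ i : ℕ, ((q i : ℚ):ℝ) < ((q (i+1) : ℚ):ℝ) := by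
      intro i
      rw [hqcast, hqcast]
      have h1 : (i:ℝ) < ((i+1 : ℕ):ℝ) := by push_cast; linarith
      have := div_lt_div_of_pos_right h1 hmpos
      linarith
    have hqltQ : ∀ i : ℕ, q i < q (i+1) := fun i => by exact_mod_cast hqlt i
    set K := m + 4 with hKdef
    have hq1 : ((q 1 : ℚ):ℝ) < 0 := by
      rw [hqcast]; push_cast; rw [div_sub_div_same]
      apply div_neg_of_neg_of_pos (by norm_num) hmpos
    have hqK : (1:ℝ) < ((q K : ℚ):ℝ) := by
      rw [hqcast, hKdef]; push_cast; rw [div_sub_div_same, lt_div_iff₀ hmpos]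
      linarith
    have hqrange : ∀ i : ℕ, i ≤ K + 1 → ((q i : ℚ):ℝ) ∈ Set.Icc (-4:ℝ) 4 := by
      intro i hi
      have hi' : (i:ℝ) ≤ (m:ℝ) + 5 := by
        have : (i:ℝ) ≤ ((K+1 : ℕ):ℝ) := by exact_mod_cast hi
        rw [hKdef] at this; push_cast at this; linarith
      have hi0 : (0:ℝ) ≤ (i:ℝ) := Nat.cast_nonneg i
      rw [hqcast, div_sub_div_same]
      constructor
      · rw [le_div_iff₀ hmpos]; nlinarith
      · rw [div_le_iff₀ hmpos]; nlinarith
    have hmeshval : ∀ i : ℕ, ((q (i+1) : ℚ):ℝ) - ((q i : ℚ):ℝ) = 1/m := by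
      intro i
      rw [hqcast, hqcast]; push_cast; field_simp; ring
    -- functions
    set G : ℕ → ℝ → ℝ := fun i => gfun ((q i : ℚ):ℝ) ((q (i+1) : ℚ):ℝ) with hGdef
    have hGcont : ∀ i, Continuous (G i) := fun i => gfun_continuous (hqlt i)
    set b : ℕ → ℝ := fun i => II μ (G i) with hbdef
    set β : ℕ → ℝ := fun i => ∫ t, G i t ∂(NU μ L h) with hβdef
    have hbT : ∀ i, Tendsto (fun n => T (μ n) (G i)) atTop (nhds (b i)) :=
      fun i => tendsto_T_II μ L h (hGcont i)
    -- brackets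
    have hblow : ∀ i, F μ ((q i : ℚ):ℝ) ≤ b (i+1) :=
      fun i => F_le_II μ L h (hqlt i) (hqltQ (i+1))
    have hbhigh : ∀ i, b i ≤ F μ ((q (i+1) : ℚ):ℝ) :=
      fun i => II_le_F μ L h (hqlt i) le_rfl
    have hβlow : ∀ i, F μ ((q i : ℚ):ℝ) ≤ β i :=
      fun i => le_integral_gfun μ L h (hqlt i)
    have hβhigh : ∀ i, β i ≤ F μ ((q (i+1) : ℚ):ℝ) :=
      fun i => integral_gfun_le μ L h (hqlt i)
    set D : ℕ → ℝ := fun i => b i - β i with hDdef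
    have hD : ∀ j, |D (j+1)| ≤ F μ ((q (j+2) : ℚ):ℝ) - F μ ((q j : ℚ):ℝ) := by
      intro j
      have h1 := hblow j
      have h2 := hbhigh (j+1)
      have h3 := hβlow (j+1)
      have h4 := hβhigh (j+1)
      have h5 : F μ ((q j : ℚ):ℝ) ≤ F μ ((q (j+1) : ℚ):ℝ) := F_mono μ L h (hqlt j).le
      rw [abs_le]; constructor <;> simp only [hDdef] <;> nlinarith
    -- boundary values
    have hG0 : ∀ t ∈ Set.Ici (0:ℝ), G 0 t = 0 :=
      fun t ht => gfun_of_ge (hqlt 0) (le_trans hq1.le ht)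
    have hGK : ∀ t ∈ Set.Iic (1:ℝ), G K t = 1 :=
      fun t ht => gfun_of_le (hqlt K) (le_trans ht hqK.le)
    have hb0 : b 0 = 0 := by
      refine tendsto_nhds_unique (hbT 0) ?_
      have : ∀ n, T (μ n) (G 0) = 0 := by
        intro n
        rw [T, integral_congr_ae (ae_of_all _ fun x => hG0 (expm x) (expm_mem x).1.le),
          integral_zero]
      simp only [this]; exact tendsto_const_nhds
    have hβ0 : β 0 = 0 := by
      have hae : G 0 =ᵐ[NU μ L h] (fun _ => (0:ℝ)) := by
        filter_upwards [NU_ae μ L h] with t ht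
        exact hG0 t ht.1
      simp only [hβdef]
      rw [integral_congr_ae hae, integral_zero]
    have hbK : b K = L 0 := II_gfun_eq_L0 μ L h (hqlt K) hqK.le
    have hβK : β K = L 0 := by
      have hae : G K =ᵐ[NU μ L h] (fun _ => (1:ℝ)) := by
        filter_upwards [NU_ae μ L h] with t ht
        exact hGK t ht.2
      simp only [hβdef]
      rw [integral_congr_ae hae, integral_const, Measure.real, NU_univ μ L h,
        ENNReal.toReal_ofReal hL0, smul_eq_mul, mul_one]
    have hDK : D K = 0 := by rw [hDdef]; simp [hbK, hβK]
    have hD0 : D 0 = 0 := by rw [hDdef]; simp [hb0, hβ0]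
    -- the step approximation
    set hstep : ℝ → ℝ :=
      fun t => ∑ j ∈ Finset.range K, g ((q (j+1) : ℚ):ℝ) * (G (j+1) t - G j t) with hstepdef
    have hstepcont : Continuous hstep := by
      apply continuous_finset_sum
      exact fun j _ => continuous_const.mul ((hGcont (j+1)).sub (hGcont j))
    -- tent facts
    have htent_nonneg : ∀ j (t : ℝ), 0 ≤ G (j+1) t - G j t := by
      intro j t
      have := gfun_le_gfun (hqlt j) (hqlt (j+1)) le_rfl t
      simp only [hGdef]; linarith [this]
    have htent_supp : ∀ j (t : ℝ), G (j+1) t - G j t ≠ 0 →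
        ((q j : ℚ):ℝ) < t ∧ t < ((q (j+2) : ℚ):ℝ) := by
      intro j t hne
      constructor
      · by_contra hcon
        push_neg at hcon
        have e1 : G j t = 1 := gfun_of_le (hqlt j) hcon
        have e2 : G (j+1) t = 1 := gfun_of_le (hqlt (j+1)) (le_trans hcon (hqlt j).le)
        exact hne (by rw [e1, e2]; ring)
      · by_contra hcon
        push_neg at hcon
        have e1 : G (j+1) t = 0 := gfun_of_ge (hqlt (j+1)) hcon
        have e2 : G j t = 0 := gfun_of_ge (hqlt j) (le_trans (hqlt (j+1)).le hcon)
        exact hne (by rw [e1, e2]; ring)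
    -- sum of tents is 1 on [0,1]
    have hsum1 : ∀ t ∈ Set.Icc (0:ℝ) 1, ∑ j ∈ Finset.range K, (G (j+1) t - G j t) = 1 := by
      intro t ht
      rw [Finset.sum_range_sub (fun j => G j t) K, hGK t ht.2, hG0 t ht.1, sub_zero]
    -- the pointwise approximation estimate
    have happrox : ∀ t ∈ Set.Icc (0:ℝ) 1, |g t - hstep t| ≤ ε' := by
      intro t ht
      have hgt : g t - hstep t
          = ∑ j ∈ Finset.range K, (g t - g ((q (j+1) : ℚ):ℝ)) * (G (j+1) t - G j t) := by
        have h1 : g t = ∑ j ∈ Finset.range K, g t * (G (j+1) t - G j t) := by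
          rw [← Finset.mul_sum, hsum1 t ht, mul_one]
        rw [hstepdef]
        calc g t - ∑ j ∈ Finset.range K, g ((q (j+1) : ℚ):ℝ) * (G (j+1) t - G j t)
            = (∑ j ∈ Finset.range K, g t * (G (j+1) t - G j t))
              - ∑ j ∈ Finset.range K, g ((q (j+1) : ℚ):ℝ) * (G (j+1) t - G j t) := by
              rw [← h1]
          _ = ∑ j ∈ Finset.range K, (g t - g ((q (j+1) : ℚ):ℝ)) * (G (j+1) t - G j t) := by
              rw [← Finset.sum_sub_distrib]
              exact Finset.sum_congr rfl fun j _ => by ring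
      rw [hgt]
      refine le_trans (Finset.abs_sum_le_sum_abs _ _) ?_
      have hterm : ∀ j ∈ Finset.range K,
          |(g t - g ((q (j+1) : ℚ):ℝ)) * (G (j+1) t - G j t)|
            ≤ ε' * (G (j+1) t - G j t) := by
        intro j hj
        rw [abs_mul, abs_of_nonneg (htent_nonneg j t)]
        rcases eq_or_ne (G (j+1) t - G j t) 0 with h0 | h0
        · rw [h0, mul_zero, mul_zero]
        · obtain ⟨hl, hr⟩ := htent_supp j t h0
          have e1 := hmeshval j
          have e2 := hmeshval (j+1)
          have hdist : dist t ((q (j+1) : ℚ):ℝ) < δ := by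
            rw [Real.dist_eq, abs_lt]
            constructor <;> nlinarith
          have hmem1 : t ∈ Set.Icc (-4:ℝ) 4 :=
            ⟨by linarith [ht.1], by linarith [ht.2]⟩
          have hjK : j < K := Finset.mem_range.mp hj
          have hmem2 := hqrange (j+1) (by omega)
          have := hδ' t hmem1 _ hmem2 hdist
          rw [Real.dist_eq] at this
          exact mul_le_mul_of_nonneg_right this.le (htent_nonneg j t)
      refine le_trans (Finset.sum_le_sum hterm) ?_
      rw [← Finset.mul_sum, hsum1 t ht, mul_one]
    -- limit of T n hstep
    set SI := ∑ j ∈ Finset.range K, g ((q (j+1):ℚ):ℝ) * (b (j+1) - b j) with hSIdef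
    have hTh'eq : ∀ n, T (μ n) hstep
        = ∑ j ∈ Finset.range K, g ((q (j+1):ℚ):ℝ)
            * (T (μ n) (G (j+1)) - T (μ n) (G j)) := by
      intro n
      simp only [T, hstepdef]
      rw [integral_finset_sum _
        (f := fun j x => g ((q (j+1) : ℚ):ℝ) * (G (j+1) (expm x) - G j (expm x))) (fun j _ =>
        ((integrable_comp (μ n) ((hGcont (j+1)).sub (hGcont j))).const_mul _))]
      refine Finset.sum_congr rfl fun j _ => ?_
      rw [integral_const_mul, integral_sub (integrable_comp _ (hGcont (j+1)))
        (integrable_comp _ (hGcont j))]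
    have hTstep : Tendsto (fun n => T (μ n) hstep) atTop (nhds SI) := by
      simp only [hTh'eq]
      exact tendsto_finset_sum _ (fun j _ => (((hbT (j+1)).sub (hbT j)).const_mul _))
    -- (i)
    have hi1 : |c - SI| ≤ ε' * L 0 := by
      refine le_of_tendsto_of_tendsto' ((hc.sub hTstep).abs)
        ((tendsto_M μ L h).const_mul ε') (fun n => ?_)
      have := T_dist_le (μ n) hg hstepcont (c := ε') (fun t ht' => by
        rw [Real.norm_eq_abs]; exact happrox t (Set.Ioc_subset_Icc_self ht'))
      simpa [Real.norm_eq_abs, M] using this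
    -- (ii)
    set SJ := ∑ j ∈ Finset.range K, g ((q (j+1):ℚ):ℝ) * (β (j+1) - β j) with hSJdef
    have hJstep : ∫ t, hstep t ∂(NU μ L h) = SJ := by
      simp only [hstepdef]
      rw [integral_finset_sum _
        (f := fun j t => g ((q (j+1) : ℚ):ℝ) * (G (j+1) t - G j t)) (fun j _ =>
        ((NU_integrable μ L h ((hGcont (j+1)).sub (hGcont j))).const_mul _))]
      refine Finset.sum_congr rfl fun j _ => ?_
      rw [integral_const_mul, integral_sub (NU_integrable μ L h (hGcont (j+1)))
        (NU_integrable μ L h (hGcont j))]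
    have hbound : ∀ᵐ t ∂(NU μ L h), ‖g t - hstep t‖ ≤ ε' := by
      filter_upwards [NU_ae μ L h] with t ht
      rw [Real.norm_eq_abs]; exact happrox t ht
    have hi2 : |(∫ t, g t ∂(NU μ L h)) - SJ| ≤ ε' * L 0 := by
      rw [← hJstep, ← integral_sub (NU_integrable μ L h hg)
        (NU_integrable μ L h hstepcont), ← Real.norm_eq_abs]
      calc ‖∫ t, (g t - hstep t) ∂(NU μ L h)‖
          ≤ ε' * ((NU μ L h) Set.univ).toReal :=
            norm_integral_le_of_norm_le_const hbound
        _ = ε' * L 0 := by rw [NU_univ μ L h, ENNReal.toReal_ofReal hL0]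
    -- (iii)
    have hstepdiff : SI - SJ
        = ∑ j ∈ Finset.range K, g ((q (j+1):ℚ):ℝ) * (D (j+1) - D j) := by
      rw [hSIdef, hSJdef, ← Finset.sum_sub_distrib]
      exact Finset.sum_congr rfl fun j _ => by simp only [hDdef]; ring
    have hi3 : |SI - SJ| ≤ ε' * (2 * L 0) := by
      have habel := abel_sum (fun j => g ((q (j+1):ℚ):ℝ)) D (m+3)
      rw [show (m+3)+1 = K from by omega] at habel
      rw [hstepdiff, habel, hDK, hD0, mul_zero, mul_zero, sub_self, zero_sub, abs_neg]
      refine le_trans (Finset.abs_sum_le_sum_abs _ _) ?_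
      have hterm : ∀ j ∈ Finset.range (m+3),
          |((fun j => g ((q (j+1):ℚ):ℝ)) (j+1) - (fun j => g ((q (j+1):ℚ):ℝ)) j) * D (j+1)|
            ≤ ε' * (F μ ((q (j+2):ℚ):ℝ) - F μ ((q j:ℚ):ℝ)) := by
        intro j hj
        simp only
        rw [abs_mul]
        refine mul_le_mul ?_ (hD j) (abs_nonneg _) hε'.le
        have hdist : dist ((q (j+2):ℚ):ℝ) ((q (j+1):ℚ):ℝ) < δ := by
          rw [Real.dist_eq, abs_of_nonneg (by linarith [hqlt (j+1)]), hmeshval (j+1)]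
          exact hmesh
        have hjm : j < m+3 := Finset.mem_range.mp hj
        have h2 := hδ' _ (hqrange (j+2) (by omega)) _ (hqrange (j+1) (by omega)) hdist
        rw [Real.dist_eq] at h2
        exact h2.le
      refine le_trans (Finset.sum_le_sum hterm) ?_
      rw [← Finset.mul_sum]
      refine mul_le_mul_of_nonneg_left ?_ hε'.le
      calc ∑ j ∈ Finset.range (m+3), (F μ ((q (j+2):ℚ):ℝ) - F μ ((q j:ℚ):ℝ))
          = (∑ j ∈ Finset.range (m+3), (F μ ((q (j+2):ℚ):ℝ) - F μ ((q (j+1):ℚ):ℝ)))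
            + ∑ j ∈ Finset.range (m+3), (F μ ((q (j+1):ℚ):ℝ) - F μ ((q j:ℚ):ℝ)) := by
            rw [← Finset.sum_add_distrib]
            exact Finset.sum_congr rfl fun j _ => by ring
        _ = (F μ ((q (m+4):ℚ):ℝ) - F μ ((q 1:ℚ):ℝ))
            + (F μ ((q (m+3):ℚ):ℝ) - F μ ((q 0:ℚ):ℝ)) := by
            rw [Finset.sum_range_sub (fun j => F μ ((q (j+1):ℚ):ℝ)) (m+3),
              Finset.sum_range_sub (fun j => F μ ((q j:ℚ):ℝ)) (m+3)]
        _ ≤ 2 * L 0 := by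
            have w1 := F_le_L0 μ L h ((q (m+4):ℚ):ℝ)
            have w2 := F_le_L0 μ L h ((q (m+3):ℚ):ℝ)
            have w3 := F_nonneg μ L h ((q 1:ℚ):ℝ)
            have w4 := F_nonneg μ L h ((q 0:ℚ):ℝ)
            linarith
    -- combine
    have htri : dist c (∫ t, g t ∂(NU μ L h))
        ≤ |c - SI| + |SI - SJ| + |SJ - ∫ t, g t ∂(NU μ L h)| := by
      rw [Real.dist_eq]
      calc |c - ∫ t, g t ∂(NU μ L h)|
          ≤ |c - SI| + |SI - ∫ t, g t ∂(NU μ L h)| := abs_sub_le _ _ _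
        _ ≤ |c - SI| + (|SI - SJ| + |SJ - ∫ t, g t ∂(NU μ L h)|) := by
            linarith [abs_sub_le SI SJ (∫ t, g t ∂(NU μ L h))]
        _ = |c - SI| + |SI - SJ| + |SJ - ∫ t, g t ∂(NU μ L h)| := by ring
    have hfin : |SJ - ∫ t, g t ∂(NU μ L h)| ≤ ε' * L 0 := by
      rw [abs_sub_comm]; exact hi2
    have h4 : ε' * (4 * (L 0 + 1)) = ε := by
      rw [hε'def]; field_simp
    calc dist c (∫ t, g t ∂(NU μ L h))
        ≤ |c - SI| + |SI - SJ| + |SJ - ∫ t, g t ∂(NU μ L h)| := htri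
      _ ≤ ε' * L 0 + ε' * (2 * L 0) + ε' * L 0 := by linarith
      _ ≤ ε := by nlinarith
  rwa [← hceq]

noncomputable def rho (t : ℝ) : NNReal := Real.toNNReal (-Real.log t)

lemma measurable_rho : Measurable rho :=
  continuous_real_toNNReal.measurable.comp Real.measurable_log.neg

lemma rho_expm (x : NNReal) : rho (expm x) = x := by
  simp [rho, expm, Real.log_exp, Real.toNNReal_coe]

include h in
lemma tendsto_integral_bcf (hL : ContinuousOn L (Set.Ici 0))
    (f : BoundedContinuousFunction NNReal ℝ) :
    Tendsto (fun n => ∫ x, f x ∂(μ n)) atTop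
      (nhds (∫ t, f (rho t) ∂(NU μ L h))) := by
  have fin : IsFiniteMeasure (NU μ L h) := NU_finite μ L h
  rw [Metric.tendsto_atTop]
  intro ε hε
  set c := ‖f‖ + 1 with hcdef
  have hfc : 0 ≤ ‖f‖ := norm_nonneg f
  have hc : 0 < c := by positivity
  set ε1 := ε / (4 * c) with hε1def
  have hε1 : 0 < ε1 := by positivity
  -- choose the cutoff scale
  have hF0 : F μ 0 = 0 := F_zero_eq μ L h hL
  have hrc := F_right_continuous μ L h 0
  rw [Metric.continuousWithinAt_iff] at hrc
  obtain ⟨δ0, hδ0, hδ0'⟩ := hrc ε1 hε1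
  set d := min (δ0/4) (1/4) with hddef
  have hd : 0 < d := lt_min (by linarith) (by norm_num)
  have hdd : d < 2*d := by linarith
  have hF2d : F μ (2*d) < ε1 := by
    have h2d : (2*d) ∈ Set.Ici (0:ℝ) := by
      simp only [Set.mem_Ici]; linarith
    have hdist : dist (2*d) 0 < δ0 := by
      rw [Real.dist_eq, sub_zero, abs_of_pos (by linarith)]
      have : d ≤ δ0/4 := min_le_left _ _
      linarith
    have := hδ0' h2d hdist
    rw [Real.dist_eq, hF0, sub_zero, abs_of_nonneg (F_nonneg μ L h _)] at this
    exact this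
  -- cutoff functions
  set χ : ℝ → ℝ := fun t => 1 - gfun d (2*d) t with hχdef
  have hχcont : Continuous χ := continuous_const.sub (gfun_continuous hdd)
  set φ : ℝ → ℝ := fun t => f (rho t) * χ t with hφdef
  have hφcont : Continuous φ := by
    rw [continuous_iff_continuousAt]
    intro t
    rcases lt_or_ge t d with ht | ht
    · refine Filter.EventuallyEq.continuousAt (y := 0) ?_
      filter_upwards [Iio_mem_nhds ht] with s hs
      have hs1 : gfun d (2*d) s = 1 := gfun_of_le hdd (le_of_lt hs)
      simp only [hφdef, hχdef, hs1, sub_self, mul_zero]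
    · have ht0 : t ≠ 0 := by intro h0; rw [h0] at ht; linarith
      refine ContinuousAt.mul ?_ hχcont.continuousAt
      exact (map_continuous f).continuousAt.comp
        (continuous_real_toNNReal.continuousAt.comp
          (Real.continuousAt_log ht0).neg)
  -- identities on the μ n side
  have hprod_int : ∀ n, Integrable (fun x : NNReal => f x * gfun d (2*d) (expm x)) (μ n) := by
    intro n
    refine ⟨((map_continuous f).mul
      ((gfun_continuous hdd).comp continuous_expm)).aestronglyMeasurable, ?_⟩
    refine HasFiniteIntegral.of_bounded (C := ‖f‖) (ae_of_all _ fun x => ?_)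
    rw [norm_mul, Real.norm_eq_abs (gfun _ _ _), abs_of_nonneg (gfun_nonneg _ _ _)]
    calc ‖f x‖ * gfun d (2*d) (expm x) ≤ ‖f‖ * 1 := by
          refine mul_le_mul (f.norm_coe_le_norm x) (gfun_le_one _ _ _)
            (gfun_nonneg _ _ _) hfc
      _ = ‖f‖ := mul_one _
  have hprodχ_int : ∀ n, Integrable (fun x : NNReal => f x * χ (expm x)) (μ n) := by
    intro n
    refine ⟨((map_continuous f).mul (hχcont.comp continuous_expm)).aestronglyMeasurable, ?_⟩
    refine HasFiniteIntegral.of_bounded (C := ‖f‖) (ae_of_all _ fun x => ?_)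
    rw [norm_mul]
    have h01 : 0 ≤ χ (expm x) ∧ χ (expm x) ≤ 1 := by
      constructor <;> simp only [hχdef] <;>
        [linarith [gfun_le_one d (2*d) (expm x)]; linarith [gfun_nonneg d (2*d) (expm x)]]
    rw [Real.norm_eq_abs (χ _), abs_of_nonneg h01.1]
    calc ‖f x‖ * χ (expm x) ≤ ‖f‖ * 1 :=
          mul_le_mul (f.norm_coe_le_norm x) h01.2 h01.1 hfc
      _ = ‖f‖ := mul_one _
  have hTφ : ∀ n, T (μ n) φ = ∫ x, (f x) * χ (expm x) ∂(μ n) := by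
    intro n
    refine integral_congr_ae (ae_of_all _ fun x => ?_)
    show f (rho (expm x)) * χ (expm x) = f x * χ (expm x)
    rw [rho_expm]
  have hdiff : ∀ n, |(∫ x, f x ∂(μ n)) - T (μ n) φ|
      ≤ ‖f‖ * T (μ n) (gfun d (2*d)) := by
    intro n
    rw [hTφ n, ← integral_sub (f.integrable (μ n)) (hprodχ_int n)]
    have hpt : ∀ x : NNReal, f x - f x * χ (expm x) = f x * gfun d (2*d) (expm x) := by
      intro x; simp only [hχdef]; ring
    rw [integral_congr_ae (ae_of_all _ hpt), ← Real.norm_eq_abs]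
    calc ‖∫ x, f x * gfun d (2*d) (expm x) ∂(μ n)‖
        ≤ ∫ x, ‖f x * gfun d (2*d) (expm x)‖ ∂(μ n) := norm_integral_le_integral_norm _
      _ ≤ ∫ x, ‖f‖ * gfun d (2*d) (expm x) ∂(μ n) := by
          refine integral_mono (hprod_int n).norm
            ((integrable_comp (μ n) (gfun_continuous hdd)).const_mul _) (fun x => ?_)
          rw [norm_mul, Real.norm_eq_abs (gfun _ _ _), abs_of_nonneg (gfun_nonneg _ _ _)]
          exact mul_le_mul_of_nonneg_right (f.norm_coe_le_norm x) (gfun_nonneg _ _ _)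
      _ = ‖f‖ * T (μ n) (gfun d (2*d)) := by rw [integral_const_mul]; rfl
  -- ν-side integrabilities and cutoff error
  have hfrho_meas : AEStronglyMeasurable (fun t => f (rho t)) (NU μ L h) :=
    ((map_continuous f).measurable.comp measurable_rho).aestronglyMeasurable
  have hfrho_int : Integrable (fun t => f (rho t)) (NU μ L h) := by
    refine ⟨hfrho_meas, ?_⟩
    exact HasFiniteIntegral.of_bounded (C := ‖f‖)
      (ae_of_all _ fun t => f.norm_coe_le_norm _)
  have hφ_int : Integrable φ (NU μ L h) := NU_integrable μ L h hφcont
  have hνdiff : |(∫ t, φ t ∂(NU μ L h)) - ∫ t, f (rho t) ∂(NU μ L h)| ≤ ‖f‖ * ε1 := by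
    rw [← integral_sub hφ_int hfrho_int, ← Real.norm_eq_abs]
    have hpt : ∀ t, φ t - f (rho t) = -(f (rho t) * gfun d (2*d) t) := by
      intro t; simp only [hφdef, hχdef]; ring
    rw [integral_congr_ae (ae_of_all _ hpt), integral_neg, norm_neg]
    have hgint : Integrable (fun t => f (rho t) * gfun d (2*d) t) (NU μ L h) := by
      refine ⟨hfrho_meas.mul (gfun_continuous hdd).aestronglyMeasurable, ?_⟩
      refine HasFiniteIntegral.of_bounded (C := ‖f‖) (ae_of_all _ fun t => ?_)
      rw [norm_mul, Real.norm_eq_abs (gfun _ _ _), abs_of_nonneg (gfun_nonneg _ _ _)]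
      calc ‖f (rho t)‖ * gfun d (2*d) t ≤ ‖f‖ * 1 :=
            mul_le_mul (f.norm_coe_le_norm _) (gfun_le_one _ _ _) (gfun_nonneg _ _ _) hfc
        _ = ‖f‖ := mul_one _
    calc ‖∫ t, f (rho t) * gfun d (2*d) t ∂(NU μ L h)‖
        ≤ ∫ t, ‖f (rho t) * gfun d (2*d) t‖ ∂(NU μ L h) := norm_integral_le_integral_norm _
      _ ≤ ∫ t, ‖f‖ * gfun d (2*d) t ∂(NU μ L h) := by
          refine integral_mono hgint.norm
            ((NU_integrable μ L h (gfun_continuous hdd)).const_mul _) (fun t => ?_)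
          rw [norm_mul, Real.norm_eq_abs (gfun _ _ _), abs_of_nonneg (gfun_nonneg _ _ _)]
          exact mul_le_mul_of_nonneg_right (f.norm_coe_le_norm _) (gfun_nonneg _ _ _)
      _ = ‖f‖ * ∫ t, gfun d (2*d) t ∂(NU μ L h) := integral_const_mul _ _
      _ ≤ ‖f‖ * ε1 := by
          refine mul_le_mul_of_nonneg_left ?_ hfc
          exact le_trans (integral_gfun_le μ L h hdd) hF2d.le
  -- limits
  have hgf_lt : ∀ᶠ n in atTop, T (μ n) (gfun d (2*d)) < ε1 := by
    have hlim := tendsto_T_II μ L h (gfun_continuous hdd)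
    have hle : II μ (gfun d (2*d)) ≤ F μ (2*d) := II_le_F μ L h hdd le_rfl
    exact hlim.eventually_lt_const (lt_of_le_of_lt hle hF2d)
  have hφlim := tendsto_T_integral μ L h hφcont
  have hφev : ∀ᶠ n in atTop, dist (T (μ n) φ) (∫ t, φ t ∂(NU μ L h)) < ε1 :=
    Metric.tendsto_nhds.mp hφlim ε1 hε1
  obtain ⟨N, hN⟩ := (hgf_lt.and hφev).exists_forall_of_atTop
  refine ⟨N, fun n hn => ?_⟩
  obtain ⟨hn1, hn2⟩ := hN n hn
  have hT0 : 0 ≤ T (μ n) (gfun d (2*d)) :=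
    T_nonneg (μ n) (fun t _ => gfun_nonneg _ _ t)
  have e1 : |(∫ x, f x ∂(μ n)) - T (μ n) φ| ≤ ‖f‖ * ε1 :=
    le_trans (hdiff n) (mul_le_mul_of_nonneg_left hn1.le hfc)
  have e2 : |T (μ n) φ - ∫ t, φ t ∂(NU μ L h)| < ε1 := by
    rw [← Real.dist_eq]; exact hn2
  rw [Real.dist_eq]
  have tri : |(∫ x, f x ∂(μ n)) - ∫ t, f (rho t) ∂(NU μ L h)|
      ≤ |(∫ x, f x ∂(μ n)) - T (μ n) φ| + |T (μ n) φ - ∫ t, φ t ∂(NU μ L h)|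
        + |(∫ t, φ t ∂(NU μ L h)) - ∫ t, f (rho t) ∂(NU μ L h)| := by
    calc |(∫ x, f x ∂(μ n)) - ∫ t, f (rho t) ∂(NU μ L h)|
        ≤ |(∫ x, f x ∂(μ n)) - T (μ n) φ|
          + |T (μ n) φ - ∫ t, f (rho t) ∂(NU μ L h)| := abs_sub_le _ _ _
      _ ≤ |(∫ x, f x ∂(μ n)) - T (μ n) φ|
          + (|T (μ n) φ - ∫ t, φ t ∂(NU μ L h)|
            + |(∫ t, φ t ∂(NU μ L h)) - ∫ t, f (rho t) ∂(NU μ L h)|) := by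
          linarith [abs_sub_le (T (μ n) φ) (∫ t, φ t ∂(NU μ L h))
            (∫ t, f (rho t) ∂(NU μ L h))]
      _ = _ := by ring
  have hfc' : ‖f‖ * ε1 ≤ c * ε1 := mul_le_mul_of_nonneg_right (by linarith) hε1.le
  have hfin : c * ε1 = ε/4 := by
    rw [hε1def]; field_simp
  linarith

end Sequence

end LaplaceCont

open LaplaceCont in
/-- If the Laplace transforms of a sequence of finite measures on `[0,∞)` converge pointwise
to a continuous function `L`, then there is a finite measure `ν` with Laplace transform `L`
to which the sequence converges weakly. -/
theorem laplace_convergence_gives_weak_convergence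
    (μ : ℕ → Measure NNReal) [∀ n, IsFiniteMeasure (μ n)]
    (L : ℝ → ℝ) (hL : ContinuousOn L (Set.Ici 0))
    (h : ∀ l : ℝ, 0 ≤ l →
      Tendsto (fun n => ∫ x, Real.exp (-l * (x : ℝ)) ∂(μ n)) atTop (nhds (L l))) :
    ∃ ν : Measure NNReal, IsFiniteMeasure ν ∧
      (∀ l : ℝ, 0 ≤ l → ∫ x, Real.exp (-l * (x : ℝ)) ∂ν = L l) ∧
      (∀ f : BoundedContinuousFunction NNReal ℝ,
        Tendsto (fun n => ∫ x, f x ∂(μ n)) atTop (nhds (∫ x, f x ∂ν))) := by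
  have fin : IsFiniteMeasure (NU μ L h) := NU_finite μ L h
  refine ⟨(NU μ L h).map rho, ?_, ?_, ?_⟩
  case _ =>
    constructor
    rw [Measure.map_apply measurable_rho MeasurableSet.univ, Set.preimage_univ]
    exact measure_lt_top _ _
  all_goals
    have hint : ∀ f : BoundedContinuousFunction NNReal ℝ,
        ∫ x, f x ∂((NU μ L h).map rho) = ∫ t, f (rho t) ∂(NU μ L h) := fun f =>
      integral_map measurable_rho.aemeasurable (map_continuous f).aestronglyMeasurable
    have hweak : ∀ f : BoundedContinuousFunction NNReal ℝ,
        Tendsto (fun n => ∫ x, f x ∂(μ n)) atTop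
          (nhds (∫ x, f x ∂((NU μ L h).map rho))) := by
      intro f
      rw [hint f]
      exact tendsto_integral_bcf μ L h hL f
  case _ =>
    intro l hl
    have hcont : Continuous (fun x : NNReal => Real.exp (-l * (x : ℝ))) := by fun_prop
    have hbd : ∀ x : NNReal, ‖Real.exp (-l * (x : ℝ))‖ ≤ 1 := by
      intro x
      rw [Real.norm_eq_abs, abs_of_pos (Real.exp_pos _)]
      apply Real.exp_le_one_iff.2
      have : 0 ≤ l * (x:ℝ) := mul_nonneg hl x.2
      linarith
    set e : BoundedContinuousFunction NNReal ℝ :=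
      BoundedContinuousFunction.ofNormedAddCommGroup _ hcont 1 hbd with hedef
    have hecoe : ∀ x : NNReal, e x = Real.exp (-l * (x : ℝ)) := fun x => rfl
    have h1 := hweak e
    have h2 := h l hl
    have h3 : (fun n => ∫ x, e x ∂(μ n))
        = fun n => ∫ x, Real.exp (-l * (x : ℝ)) ∂(μ n) := by
      funext n; exact integral_congr_ae (ae_of_all _ fun x => hecoe x)
    rw [h3] at h1
    have h4 : ∫ x, Real.exp (-l * (x : ℝ)) ∂((NU μ L h).map rho)
        = ∫ x, e x ∂((NU μ L h).map rho) :=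
      integral_congr_ae (ae_of_all _ fun x => (hecoe x).symm)
    rw [h4]
    exact tendsto_nhds_unique h1 h2
  case _ =>
    exact hweak
end

section
/- For every 0 < α < 1 and λ ≥ 0, one has λ^{1+α} = (α(1+α)/Γ(1-α)) · ∫_0^∞ (e^{-λu} - 1 + λu) u^{-2-α} du. -/
open Real MeasureTheory Set Filter Topology

private lemma exp_lb' (x : ℝ) : 1 - x ≤ Real.exp (-x) := by
  linarith [Real.add_one_le_exp (-x)]

private lemma E_nonneg' (x : ℝ) : 0 ≤ Real.exp (-x) - 1 + x := by
  linarith [exp_lb' x]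

private lemma E_lin' {x : ℝ} (hx : 0 ≤ x) : Real.exp (-x) - 1 + x ≤ x := by
  have : Real.exp (-x) ≤ 1 := Real.exp_le_one_iff.mpr (by linarith)
  linarith

private lemma E_quad' {x : ℝ} (hx : 0 ≤ x) : Real.exp (-x) - 1 + x ≤ x ^ 2 / 2 := by
  set f : ℝ → ℝ := fun t => t ^ 2 / 2 - (Real.exp (-t) - 1 + t) with hf
  have key : ∀ y : ℝ, HasDerivAt f (y - (1 - Real.exp (-y))) y := by
    intro y
    have h1 : HasDerivAt (fun t : ℝ => Real.exp (-t)) (-Real.exp (-y)) y := by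
      exact ((Real.hasDerivAt_exp (-y)).comp y (hasDerivAt_neg y)).congr_deriv (by ring)
    have h2 : HasDerivAt (fun t : ℝ => t ^ 2 / 2) y y := by
      simpa using (hasDerivAt_pow 2 y).div_const 2
    have := h2.sub ((h1.sub_const 1).add (hasDerivAt_id y))
    refine this.congr_deriv (Eq.symm ?_)
    ring
  have mono : MonotoneOn f (Ici 0) := by
    apply monotoneOn_of_deriv_nonneg (convex_Ici 0)
    · exact fun y _ => (key y).continuousAt.continuousWithinAt
    · exact fun y _ => (key y).differentiableAt.differentiableWithinAt
    · intro y hy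
      rw [interior_Ici] at hy
      rw [(key y).deriv]
      have := exp_lb' y; linarith
  have h0 : f 0 ≤ f x := mono self_mem_Ici hx hx
  have : f 0 = 0 := by simp [hf]
  rw [this] at h0
  simp only [hf] at h0
  linarith

private lemma integrableOn_aux {α : ℝ} (hα1 : 0 < α) (hα2 : α < 1) (c1 c2 : ℝ) (f : ℝ → ℝ)
    (hc : ContinuousOn f (Ioi 0))
    (h1 : ∀ u ∈ Ioc (0:ℝ) 1, ‖f u‖ ≤ c1 * u ^ (-α))
    (h2 : ∀ u ∈ Ioi (1:ℝ), ‖f u‖ ≤ c2 * u ^ (-1 - α)) :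
    IntegrableOn f (Ioi 0) := by
  rw [← Ioc_union_Ioi_eq_Ioi (zero_le_one' ℝ)]
  apply IntegrableOn.union
  · have hg : IntegrableOn (fun u : ℝ => c1 * u ^ (-α)) (Ioc 0 1) := by
      rw [integrableOn_Ioc_iff_integrableOn_Ioo]
      exact ((intervalIntegral.integrableOn_Ioo_rpow_iff one_pos).mpr (by linarith)).const_mul c1
    exact Integrable.mono' hg
      ((hc.mono Ioc_subset_Ioi_self).aestronglyMeasurable measurableSet_Ioc)
      ((ae_restrict_iff' measurableSet_Ioc).mpr (Eventually.of_forall h1))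
  · have hg : IntegrableOn (fun u : ℝ => c2 * u ^ (-1 - α)) (Ioi 1) := by
      exact (integrableOn_Ioi_rpow_of_lt (by linarith) one_pos).const_mul c2
    refine Integrable.mono' hg
      ((hc.mono (Ioi_subset_Ioi zero_le_one)).aestronglyMeasurable measurableSet_Ioi)
      ((ae_restrict_iff' measurableSet_Ioi).mpr (Eventually.of_forall h2))

private lemma key_integral {α l : ℝ} (hα1 : 0 < α) (hα2 : α < 1) (hl : 0 < l) :
    ∫ u in Ioi (0:ℝ), (Real.exp (-(l * u)) - 1 + l * u) * u ^ (-2 - α)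
      = Real.Gamma (1 - α) * l ^ (1 + α) / (α * (1 + α)) := by
  have h1α : (0:ℝ) < 1 + α := by linarith
  have h1α' : (1:ℝ) + α ≠ 0 := ne_of_gt h1α
  set f0 : ℝ → ℝ := fun u => (Real.exp (-(l * u)) - 1 + l * u) * u ^ (-2 - α) with hf0
  set f1 : ℝ → ℝ := fun u => l * (1 - Real.exp (-(l * u))) * u ^ (-1 - α) with hf1
  set f2 : ℝ → ℝ := fun u => Real.exp (-(l * u)) * u ^ (-α) with hf2
  -- continuity
  have contrpow : ∀ c : ℝ, ContinuousOn (fun u : ℝ => u ^ c) (Ioi 0) := by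
    intro c
    exact fun x hx => (Real.continuousAt_rpow_const x c (Or.inl (ne_of_gt hx))).continuousWithinAt
  have contE : Continuous (fun u : ℝ => Real.exp (-(l * u)) - 1 + l * u) := by continuity
  have cont0 : ContinuousOn f0 (Ioi 0) := contE.continuousOn.mul (contrpow _)
  have cont1 : ContinuousOn f1 (Ioi 0) := by
    apply ContinuousOn.mul _ (contrpow _)
    exact (continuous_const.mul (by continuity)).continuousOn
  -- integrability
  have I0 : IntegrableOn f0 (Ioi 0) := by
    apply integrableOn_aux hα1 hα2 (l ^ 2 / 2) l f0 cont0
    · intro u hu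
      have hu0 : (0:ℝ) < u := hu.1
      have hE := E_quad' (mul_nonneg hl.le hu0.le)
      have hE0 := E_nonneg' (l * u)
      have hrp : (0:ℝ) ≤ u ^ (-2 - α) := Real.rpow_nonneg hu0.le _
      have habs : ‖f0 u‖ = (Real.exp (-(l * u)) - 1 + l * u) * u ^ (-2 - α) := by
        rw [Real.norm_eq_abs, abs_of_nonneg (mul_nonneg hE0 hrp)]
      rw [habs]
      have key : u ^ 2 * u ^ (-2 - α) = u ^ (-α) := by
        rw [← Real.rpow_natCast u 2, ← Real.rpow_add hu0]
        congr 1; push_cast; ring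
      calc (Real.exp (-(l * u)) - 1 + l * u) * u ^ (-2 - α)
          ≤ ((l * u) ^ 2 / 2) * u ^ (-2 - α) := by
            exact mul_le_mul_of_nonneg_right hE hrp
        _ = l ^ 2 / 2 * (u ^ 2 * u ^ (-2 - α)) := by ring
        _ = l ^ 2 / 2 * u ^ (-α) := by rw [key]
    · intro u hu
      have hu0 : (0:ℝ) < u := lt_trans one_pos hu
      have hE := E_lin' (mul_nonneg hl.le hu0.le)
      have hE0 := E_nonneg' (l * u)
      have hrp : (0:ℝ) ≤ u ^ (-2 - α) := Real.rpow_nonneg hu0.le _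
      have habs : ‖f0 u‖ = (Real.exp (-(l * u)) - 1 + l * u) * u ^ (-2 - α) := by
        rw [Real.norm_eq_abs, abs_of_nonneg (mul_nonneg hE0 hrp)]
      rw [habs]
      have key : u * u ^ (-2 - α) = u ^ (-1 - α) := by
        nth_rewrite 1 [← Real.rpow_one u]
        rw [← Real.rpow_add hu0]; congr 1 <;> ring
      calc (Real.exp (-(l * u)) - 1 + l * u) * u ^ (-2 - α)
          ≤ (l * u) * u ^ (-2 - α) := mul_le_mul_of_nonneg_right hE hrp
        _ = l * (u * u ^ (-2 - α)) := by ring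
        _ = l * u ^ (-1 - α) := by rw [key]
  have I1 : IntegrableOn f1 (Ioi 0) := by
    apply integrableOn_aux hα1 hα2 (l ^ 2) l f1 cont1
    · intro u hu
      have hu0 : (0:ℝ) < u := hu.1
      have hexp : Real.exp (-(l * u)) ≤ 1 := Real.exp_le_one_iff.mpr (by nlinarith)
      have hlb : 1 - l * u ≤ Real.exp (-(l * u)) := exp_lb' (l * u)
      have hrp : (0:ℝ) ≤ u ^ (-1 - α) := Real.rpow_nonneg hu0.le _
      have habs : ‖f1 u‖ = l * (1 - Real.exp (-(l * u))) * u ^ (-1 - α) := by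
        rw [Real.norm_eq_abs, abs_of_nonneg]
        apply mul_nonneg (mul_nonneg hl.le (by linarith)) hrp
      rw [habs]
      have key : u * u ^ (-1 - α) = u ^ (-α) := by
        nth_rewrite 1 [← Real.rpow_one u]
        rw [← Real.rpow_add hu0]; congr 1 <;> ring
      calc l * (1 - Real.exp (-(l * u))) * u ^ (-1 - α)
          ≤ l * (l * u) * u ^ (-1 - α) := by
            apply mul_le_mul_of_nonneg_right _ hrp
            apply mul_le_mul_of_nonneg_left (by linarith) hl.le
        _ = l ^ 2 * (u * u ^ (-1 - α)) := by ring
        _ = l ^ 2 * u ^ (-α) := by rw [key]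
    · intro u hu
      have hu0 : (0:ℝ) < u := lt_trans one_pos hu
      have hexp : Real.exp (-(l * u)) ≤ 1 := Real.exp_le_one_iff.mpr (by nlinarith)
      have hexp0 : (0:ℝ) ≤ Real.exp (-(l * u)) := (Real.exp_pos _).le
      have hrp : (0:ℝ) ≤ u ^ (-1 - α) := Real.rpow_nonneg hu0.le _
      have habs : ‖f1 u‖ = l * (1 - Real.exp (-(l * u))) * u ^ (-1 - α) := by
        rw [Real.norm_eq_abs, abs_of_nonneg]
        apply mul_nonneg (mul_nonneg hl.le (by linarith)) hrp
      rw [habs]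
      apply mul_le_mul_of_nonneg_right _ hrp
      nlinarith
  have I2 : IntegrableOn f2 (Ioi 0) := by
    have h := integrableOn_rpow_mul_exp_neg_mul_rpow (s := -α) (p := 1) (b := l)
      (by linarith) one_pos hl
    apply h.congr_fun _ measurableSet_Ioi
    intro x _
    simp [Real.rpow_one, mul_comm, neg_mul, hf2]
  -- derivatives
  have hEder : ∀ u : ℝ, HasDerivAt (fun t : ℝ => Real.exp (-(l * t)) - 1 + l * t)
      (l * (1 - Real.exp (-(l * u)))) u := by
    intro u
    have h1 : HasDerivAt (fun t : ℝ => -(l * t)) (-l) u := by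
      exact (((hasDerivAt_id u).const_mul l).neg).congr_deriv (by ring)
    have h2 := (Real.hasDerivAt_exp (-(l * u))).comp u h1
    have h3 : HasDerivAt (fun t : ℝ => l * t) l u := by
      simpa using (hasDerivAt_id u).const_mul l
    refine ((h2.sub_const 1).add h3).congr_deriv (Eq.symm ?_)
    ring
  have hrpow : ∀ (c : ℝ) (u : ℝ), 0 < u → HasDerivAt (fun t : ℝ => t ^ c) (c * u ^ (c - 1)) u :=
    fun c u hu => Real.hasDerivAt_rpow_const (Or.inl (ne_of_gt hu))
  set A : ℝ → ℝ := fun u => -((Real.exp (-(l * u)) - 1 + l * u) * u ^ (-1 - α)) / (1 + α) with hA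
  have hderivA : ∀ u ∈ Ioi (0:ℝ), HasDerivAt A (f0 u - f1 u / (1 + α)) u := by
    intro u hu
    have hu0 : (0:ℝ) < u := hu
    have h := (((hEder u).mul (hrpow (-1 - α) u hu0)).neg).div_const (1 + α)
    refine h.congr_deriv (Eq.symm ?_)
    have e1 : u ^ (-1 - α - 1) = u ^ (-2 - α) := by congr 1 <;> ring
    rw [e1]
    simp only [hf0, hf1]
    field_simp
    ring
  have hA0 : A 0 = 0 := by
    simp [hA, Real.zero_rpow (show (-1:ℝ) - α ≠ 0 by linarith)]
  have keymul : ∀ u : ℝ, 0 < u → u * u ^ (-1 - α) = u ^ (-α) := by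
    intro u hu
    nth_rewrite 1 [← Real.rpow_one u]
    rw [← Real.rpow_add hu]; congr 1 <;> ring
  have keymul2 : ∀ u : ℝ, 0 < u → u ^ 2 * u ^ (-1 - α) = u ^ (1 - α) := by
    intro u hu
    rw [← Real.rpow_natCast u 2, ← Real.rpow_add hu]; congr 1; push_cast; ring
  have htopA : Tendsto A atTop (𝓝 0) := by
    apply squeeze_zero_norm' (a := fun u => l / (1 + α) * u ^ (-α))
    · filter_upwards [eventually_gt_atTop (0:ℝ)] with u hu
      have hE0 := E_nonneg' (l * u)
      have hrp : (0:ℝ) ≤ u ^ (-1 - α) := Real.rpow_nonneg hu.le _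
      have hEl := E_lin' (mul_nonneg hl.le hu.le)
      have habs : ‖A u‖ = (Real.exp (-(l * u)) - 1 + l * u) * u ^ (-1 - α) / (1 + α) := by
        simp only [hA]
        rw [Real.norm_eq_abs, abs_div, abs_neg, abs_of_nonneg (mul_nonneg hE0 hrp),
          abs_of_nonneg h1α.le]
      rw [habs, show l / (1 + α) * u ^ (-α) = l * u * u ^ (-1 - α) / (1 + α) by
        rw [← keymul u hu]; ring]
      gcongr
    · simpa using (tendsto_rpow_neg_atTop hα1).const_mul (l / (1 + α))
  have hcontA : ContinuousWithinAt A (Ici 0) 0 := by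
    show Tendsto A (nhdsWithin 0 (Ici 0)) (𝓝 (A 0))
    rw [hA0]
    apply squeeze_zero_norm' (a := fun u => l ^ 2 / (2 * (1 + α)) * u ^ (1 - α))
    · filter_upwards [self_mem_nhdsWithin] with u hu
      rcases eq_or_lt_of_le (mem_Ici.mp hu) with h | h
      · rw [← h]
        simp [hA0, Real.zero_rpow (ne_of_gt (show (0:ℝ) < 1 - α by linarith))]
      · have hE0 := E_nonneg' (l * u)
        have hrp : (0:ℝ) ≤ u ^ (-1 - α) := Real.rpow_nonneg h.le _
        have hEq := E_quad' (mul_nonneg hl.le h.le)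
        have habs : ‖A u‖ = (Real.exp (-(l * u)) - 1 + l * u) * u ^ (-1 - α) / (1 + α) := by
          simp only [hA]
          rw [Real.norm_eq_abs, abs_div, abs_neg, abs_of_nonneg (mul_nonneg hE0 hrp),
            abs_of_nonneg h1α.le]
        rw [habs, show l ^ 2 / (2 * (1 + α)) * u ^ (1 - α)
            = (l * u) ^ 2 / 2 * u ^ (-1 - α) / (1 + α) by rw [← keymul2 u h]; field_simp]
        gcongr
    · have hc : ContinuousAt (fun u : ℝ => u ^ (1 - α)) 0 :=
        Real.continuousAt_rpow_const 0 _ (Or.inr (by linarith))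
      have := (hc.tendsto.mono_left (nhdsWithin_le_nhds (s := Ici (0:ℝ)))).const_mul (l ^ 2 / (2 * (1 + α)))
      simpa [Real.zero_rpow (ne_of_gt (show (0:ℝ) < 1 - α by linarith))] using this
  have e1 := integral_Ioi_of_hasDerivAt_of_tendsto hcontA hderivA
    (I0.sub (I1.div_const (1 + α))) htopA
  rw [hA0, sub_zero, integral_sub I0 (I1.div_const _), integral_div] at e1
  -- second integration by parts
  have hGder : ∀ u : ℝ, HasDerivAt (fun t : ℝ => l * (1 - Real.exp (-(l * t))))
      (l * (l * Real.exp (-(l * u)))) u := by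
    intro u
    have h1 : HasDerivAt (fun t : ℝ => -(l * t)) (-l) u := by
      exact (((hasDerivAt_id u).const_mul l).neg).congr_deriv (by ring)
    have h2 := (Real.hasDerivAt_exp (-(l * u))).comp u h1
    have := ((hasDerivAt_const u (1:ℝ)).sub h2).const_mul l
    refine this.congr_deriv (Eq.symm ?_)
    ring
  set B : ℝ → ℝ := fun u => -(l * (1 - Real.exp (-(l * u))) * u ^ (-α)) / α with hB
  have hderivB : ∀ u ∈ Ioi (0:ℝ), HasDerivAt B (f1 u - l ^ 2 / α * f2 u) u := by
    intro u hu
    have hu0 : (0:ℝ) < u := hu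
    have h := (((hGder u).mul (hrpow (-α) u hu0)).neg).div_const α
    refine h.congr_deriv (Eq.symm ?_)
    have e1 : u ^ (-α - 1) = u ^ (-1 - α) := by congr 1 <;> ring
    rw [e1]
    simp only [hf1, hf2]
    field_simp
    ring
  have hB0 : B 0 = 0 := by
    simp [hB]
  have htopB : Tendsto B atTop (𝓝 0) := by
    apply squeeze_zero_norm' (a := fun u => l / α * u ^ (-α))
    · filter_upwards [eventually_gt_atTop (0:ℝ)] with u hu
      have hrp : (0:ℝ) ≤ u ^ (-α) := Real.rpow_nonneg hu.le _
      have hexp : Real.exp (-(l * u)) ≤ 1 :=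
        Real.exp_le_one_iff.mpr (by nlinarith)
      have hexp0 : (0:ℝ) ≤ Real.exp (-(l * u)) := (Real.exp_pos _).le
      have habs : ‖B u‖ = l * (1 - Real.exp (-(l * u))) * u ^ (-α) / α := by
        simp only [hB]
        rw [Real.norm_eq_abs, abs_div, abs_neg,
          abs_of_nonneg (mul_nonneg (mul_nonneg hl.le (by linarith)) hrp),
          abs_of_nonneg hα1.le]
      rw [habs, show l / α * u ^ (-α) = l * 1 * u ^ (-α) / α by ring]
      gcongr
      linarith
    · simpa using (tendsto_rpow_neg_atTop hα1).const_mul (l / α)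
  have hcontB : ContinuousWithinAt B (Ici 0) 0 := by
    show Tendsto B (nhdsWithin 0 (Ici 0)) (𝓝 (B 0))
    rw [hB0]
    apply squeeze_zero_norm' (a := fun u => l ^ 2 / α * u ^ (1 - α))
    · filter_upwards [self_mem_nhdsWithin] with u hu
      rcases eq_or_lt_of_le (mem_Ici.mp hu) with h | h
      · rw [← h]
        simp [hB0, Real.zero_rpow (ne_of_gt (show (0:ℝ) < 1 - α by linarith))]
      · have hrp : (0:ℝ) ≤ u ^ (-α) := Real.rpow_nonneg h.le _
        have hexp : Real.exp (-(l * u)) ≤ 1 :=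
          Real.exp_le_one_iff.mpr (by nlinarith)
        have hlb := exp_lb' (l * u)
        have habs : ‖B u‖ = l * (1 - Real.exp (-(l * u))) * u ^ (-α) / α := by
          simp only [hB]
          rw [Real.norm_eq_abs, abs_div, abs_neg,
            abs_of_nonneg (mul_nonneg (mul_nonneg hl.le (by linarith)) hrp),
            abs_of_nonneg hα1.le]
        have keymul3 : u * u ^ (-α) = u ^ (1 - α) := by
          nth_rewrite 1 [← Real.rpow_one u]
          rw [← Real.rpow_add h]; congr 1 <;> ring
        rw [habs, show l ^ 2 / α * u ^ (1 - α) = l * (l * u) * u ^ (-α) / α by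
          rw [← keymul3]; ring]
        gcongr
        linarith
    · have hc : ContinuousAt (fun u : ℝ => u ^ (1 - α)) 0 :=
        Real.continuousAt_rpow_const 0 _ (Or.inr (by linarith))
      have := (hc.tendsto.mono_left (nhdsWithin_le_nhds (s := Ici (0:ℝ)))).const_mul (l ^ 2 / α)
      simpa [Real.zero_rpow (ne_of_gt (show (0:ℝ) < 1 - α by linarith))] using this
  have e2 := integral_Ioi_of_hasDerivAt_of_tendsto hcontB hderivB
    (I1.sub (I2.const_mul (l ^ 2 / α))) htopB
  rw [hB0, sub_zero, integral_sub I1 (I2.const_mul _), integral_const_mul] at e2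
  -- Gamma integral
  have e3 : ∫ u in Ioi (0:ℝ), f2 u = l ^ (α - 1) * Real.Gamma (1 - α) := by
    have h := integral_rpow_mul_exp_neg_mul_rpow (p := 1) (q := -α) (b := l)
      one_pos (by linarith) hl
    rw [show (∫ u in Ioi (0:ℝ), f2 u) = ∫ x in Ioi (0:ℝ), x ^ (-α) * Real.exp (-l * x ^ (1:ℝ))
      from setIntegral_congr_fun measurableSet_Ioi
        (fun x _ => by simp [hf2, Real.rpow_one, mul_comm, neg_mul]), h,
      show (-(-α + 1) / 1 : ℝ) = α - 1 by ring, show ((-α + 1) / 1 : ℝ) = 1 - α by ring]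
    ring
  have hint1 : ∫ u in Ioi (0:ℝ), f1 u = l ^ 2 / α * (l ^ (α - 1) * Real.Gamma (1 - α)) := by
    rw [← e3]; linarith
  have lpow : l ^ 2 * l ^ (α - 1) = l ^ (1 + α) := by
    rw [← Real.rpow_natCast l 2, ← Real.rpow_add hl]; congr 1; push_cast; ring
  have : ∫ u in Ioi (0:ℝ), f0 u = l ^ 2 / α * (l ^ (α - 1) * Real.Gamma (1 - α)) / (1 + α) := by
    rw [← hint1]; linarith
  rw [this, show l ^ 2 / α * (l ^ (α - 1) * Real.Gamma (1 - α)) / (1 + α)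
    = Real.Gamma (1 - α) * (l ^ 2 * l ^ (α - 1)) / (α * (1 + α)) by field_simp, lpow]

/-- The stable branching mechanism representation:
`λ^{1+α} = (α(1+α)/Γ(1-α)) ∫_0^∞ (e^{-λu} - 1 + λu) u^{-2-α} du` for `0 < α < 1`, `λ ≥ 0`. -/
theorem stable_branching_mechanism_representation
    (α : ℝ) (hα1 : 0 < α) (hα2 : α < 1) (l : ℝ) (hl : 0 ≤ l) :
    l ^ (1 + α) = (α * (1 + α) / Real.Gamma (1 - α)) *
      ∫ u in Set.Ioi (0 : ℝ), (Real.exp (-l * u) - 1 + l * u) * u ^ (-2 - α) := by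
  rcases eq_or_lt_of_le hl with h | h
  · rw [← h]
    simp [Real.zero_rpow (show (1:ℝ) + α ≠ 0 by positivity)]
  · have key := key_integral hα1 hα2 h
    have hG : Real.Gamma (1 - α) ≠ 0 := (Real.Gamma_pos_of_pos (by linarith)).ne'
    simp only [neg_mul]
    rw [key]
    field_simp
end

section
/- Let c > 0, 0 < α ≤ 1 and b ∈ ℝ, and let φ(z) = c z^{1+α} + b z. For λ ≥ 0, the unique solution t ↦ v_t(λ) of the ODE ∂_t v_t(λ) = -φ(v_t(λ)) with v_0(λ) = λ is given by v_t(λ) = e^{-bt} λ / (1 + c q_α^b(t) λ^α)^{1/α}, where q_α^b(t) = b^{-1}(1 - e^{-αbt}) if b ≠ 0 and q_α^0(t) = αt. -/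
open Set

private lemma exp_rpow_aux (x y : ℝ) : Real.exp x ^ y = Real.exp (x * y) := by
  rw [Real.rpow_def_of_pos (Real.exp_pos x), Real.log_exp]

/-- Explicit solution of the cumulant ODE for the stable branching mechanism
`φ(z) = c z^{1+α} + b z`. -/
theorem stable_cumulant_explicit_solution
    (c : ℝ) (hc : 0 < c) (α : ℝ) (hα1 : 0 < α) (hα2 : α ≤ 1)
    (b l : ℝ) (hl : 0 ≤ l)
    (q : ℝ → ℝ) (hq : ∀ t, q t = if b = 0 then α * t else b⁻¹ * (1 - Real.exp (-α * b * t)))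
    (w : ℝ → ℝ)
    (hw : ∀ t, w t = Real.exp (-b * t) * l / (1 + c * q t * l ^ α) ^ (1 / α)) :
    (w 0 = l ∧
      ∀ t, 0 ≤ t → HasDerivWithinAt w (-(c * (w t) ^ (1 + α) + b * w t)) (Ici 0) t) ∧
    (∀ v : ℝ → ℝ, v 0 = l → (∀ t, 0 ≤ t → 0 ≤ v t) →
      (∀ t, 0 ≤ t → HasDerivWithinAt v (-(c * (v t) ^ (1 + α) + b * v t)) (Ici 0) t) →
      ∀ t, 0 ≤ t → v t = w t) := by
  have hα : α ≠ 0 := ne_of_gt hα1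
  have hlα : 0 ≤ l ^ α := Real.rpow_nonneg hl α
  -- derivative of q
  have hq' : ∀ t, HasDerivAt q (α * Real.exp (-α * b * t)) t := by
    intro t
    rcases eq_or_ne b 0 with hb | hb
    · have hqf : q = fun s => α * s := by funext s; rw [hq s, if_pos hb]
      rw [hqf]
      simpa [hb] using (hasDerivAt_id t).const_mul α
    · have hqf : q = fun s => b⁻¹ * (1 - Real.exp (-α * b * s)) := by
        funext s; rw [hq s, if_neg hb]
      rw [hqf]
      have h1 : HasDerivAt (fun s : ℝ => -α * b * s) (-α * b) t := by
        simpa using (hasDerivAt_id t).const_mul (-α * b)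
      have h3 := (h1.exp.const_sub 1).const_mul b⁻¹
      refine h3.congr_deriv ?_
      field_simp
  -- nonnegativity of q
  have hq0 : ∀ t, 0 ≤ t → 0 ≤ q t := by
    intro t ht
    rw [hq]
    rcases eq_or_ne b 0 with hb | hb
    · rw [if_pos hb]; positivity
    · rw [if_neg hb]
      rcases lt_or_gt_of_ne hb with hbneg | hbpos
      · have hp : 0 ≤ α * -b * t := mul_nonneg (mul_nonneg hα1.le (by linarith)) ht
        have h1 : (1:ℝ) ≤ Real.exp (-α * b * t) := Real.one_le_exp (by nlinarith)
        have h2 : b⁻¹ ≤ 0 := inv_nonpos.mpr hbneg.le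
        nlinarith
      · have hp : 0 ≤ α * b * t := mul_nonneg (mul_nonneg hα1.le hbpos.le) ht
        have h1 : Real.exp (-α * b * t) ≤ 1 := Real.exp_le_one_iff.mpr (by nlinarith)
        have h2 : (0:ℝ) ≤ b⁻¹ := by positivity
        nlinarith
  -- the denominator base
  have hGt : ∀ t, 0 ≤ t → 0 < 1 + c * q t * l ^ α := by
    intro t ht
    have := mul_nonneg (mul_nonneg hc.le (hq0 t ht)) hlα
    linarith
  -- w agrees with an everywhere-differentiable expression on Ici 0
  have hwW : ∀ s ∈ Ici (0:ℝ), w s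
      = Real.exp (-b * s) * l * (1 + c * q s * l ^ α) ^ (-(1/α)) := by
    intro s hs
    rw [hw s, Real.rpow_neg (hGt s hs).le, div_eq_mul_inv]
  -- w 0 = l
  have hq00 : q 0 = 0 := by
    rw [hq 0]; rcases eq_or_ne b 0 with hb | hb <;> simp [hb]
  have hw0l : w 0 = l := by
    rw [hw 0, hq00]; simp
  -- nonnegativity of w
  have hwnn : ∀ t, 0 ≤ t → 0 ≤ w t := by
    intro t ht
    rw [hw t]
    exact div_nonneg (mul_nonneg (Real.exp_pos _).le hl)
      (Real.rpow_nonneg (hGt t ht).le _)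
  -- derivative of w
  have hwderiv : ∀ t, 0 ≤ t →
      HasDerivWithinAt w (-(c * (w t) ^ (1 + α) + b * w t)) (Ici 0) t := by
    intro t ht
    have hGpos := hGt t ht
    have hG' : HasDerivAt (fun s => 1 + c * q s * l ^ α)
        (c * (α * Real.exp (-α * b * t)) * l ^ α) t := by
      have := (((hq' t).const_mul c).mul_const (l ^ α)).const_add 1
      convert this using 1
      all_goals ring
    have hE : HasDerivAt (fun s : ℝ => Real.exp (-b * s)) (Real.exp (-b * t) * (-b)) t := by
      have h1 : HasDerivAt (fun s : ℝ => -b * s) (-b) t := by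
        simpa using (hasDerivAt_id t).const_mul (-b)
      exact h1.exp
    have hGp : HasDerivAt (fun s => (1 + c * q s * l ^ α) ^ (-(1/α)))
        ((-(1/α)) * (1 + c * q t * l ^ α) ^ (-(1/α) - 1)
          * (c * (α * Real.exp (-α * b * t)) * l ^ α)) t := by
      have h := (Real.hasDerivAt_rpow_const (p := -(1/α)) (Or.inl (ne_of_gt hGpos))).comp t hG'
      refine h.congr_deriv ?_
      all_goals ring
    have hW := (hE.mul_const l).mul hGp
    have key : HasDerivWithinAt w
        (Real.exp (-b * t) * (-b) * l * (1 + c * q t * l ^ α) ^ (-(1/α))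
          + Real.exp (-b * t) * l *
            ((-(1/α)) * (1 + c * q t * l ^ α) ^ (-(1/α) - 1)
              * (c * (α * Real.exp (-α * b * t)) * l ^ α))) (Ici 0) t :=
      hW.hasDerivWithinAt.congr (fun s hs => hwW s hs) (hwW t ht)
    convert key using 1
    rw [hwW t ht]
    have hE0 : (0:ℝ) ≤ Real.exp (-b * t) := (Real.exp_pos _).le
    have hGn0 : (0:ℝ) ≤ (1 + c * q t * l ^ α) ^ (-(1/α)) := Real.rpow_nonneg hGpos.le _
    rw [Real.mul_rpow (mul_nonneg hE0 hl) hGn0, Real.mul_rpow hE0 hl,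
      exp_rpow_aux, ← Real.rpow_mul hGpos.le,
      Real.rpow_add_of_nonneg hl zero_le_one hα1.le, Real.rpow_one]
    have e1 : -b * t * (1 + α) = (-b * t) + (-α * b * t) := by ring
    have e2 : (-(1/α)) * (1 + α) = -(1/α) - 1 := by field_simp; ring
    rw [e1, Real.exp_add, e2]
    have hinv : (1/α) * α = 1 := by field_simp
    linear_combination (Real.exp (-b * t) * Real.exp (-α * b * t) * l * l ^ α *
      (1 + c * q t * l ^ α) ^ (-(1/α) - 1) * c) * hinv
  refine ⟨⟨hw0l, hwderiv⟩, ?_⟩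
  -- uniqueness
  intro v hv0 hvnn hv' t ht
  -- continuity of solutions on [0, t]
  have hvc : ContinuousOn v (Icc 0 t) := fun s hs =>
    ((hv' s hs.1).continuousWithinAt).mono Icc_subset_Ici_self
  have hwc : ContinuousOn w (Icc 0 t) := fun s hs =>
    ((hwderiv s hs.1).continuousWithinAt).mono Icc_subset_Ici_self
  obtain ⟨Cv, hCv⟩ := isCompact_Icc.exists_bound_of_continuousOn hvc
  obtain ⟨Cw, hCw⟩ := isCompact_Icc.exists_bound_of_continuousOn hwc
  set M : ℝ := max Cv Cw with hM
  have h0mem : (0:ℝ) ∈ Icc 0 t := ⟨le_refl 0, ht⟩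
  have hM0 : 0 ≤ M :=
    le_trans (norm_nonneg (v 0)) (le_trans (hCv 0 h0mem) (le_max_left _ _))
  have hMα : 0 ≤ M ^ α := Real.rpow_nonneg hM0 α
  have hK0 : 0 ≤ c * (1 + α) * M ^ α + |b| := by
    have h1 : 0 ≤ c * (1 + α) * M ^ α :=
      mul_nonneg (mul_nonneg hc.le (by linarith)) hMα
    have := abs_nonneg b
    linarith
  set K : NNReal := ⟨c * (1 + α) * M ^ α + |b|, hK0⟩ with hKdef
  -- the vector field is Lipschitz on [0, M]
  have hF : ∀ z ∈ Icc (0:ℝ) M, HasDerivWithinAt (fun z : ℝ => -(c * z ^ (1 + α) + b * z))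
      (-(c * ((1 + α) * z ^ α) + b)) (Icc 0 M) z := by
    intro z _
    have h1 : HasDerivAt (fun z : ℝ => z ^ (1 + α)) ((1 + α) * z ^ ((1 + α) - 1)) z :=
      Real.hasDerivAt_rpow_const (Or.inr (by linarith))
    have h1' : HasDerivAt (fun z : ℝ => z ^ (1 + α)) ((1 + α) * z ^ α) z := by
      convert h1 using 2; ring
    have h2 := ((h1'.const_mul c).add ((hasDerivAt_id z).const_mul b)).neg
    have h3 : -(c * ((1 + α) * z ^ α) + b) = -(c * ((1 + α) * z ^ α) + b * 1) := by ring
    rw [h3]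
    exact h2.hasDerivWithinAt
  have hbound : ∀ z ∈ Icc (0:ℝ) M, ‖-(c * ((1 + α) * z ^ α) + b)‖₊ ≤ K := by
    intro z hz
    rw [← NNReal.coe_le_coe, coe_nnnorm]
    have hz0 : 0 ≤ z ^ α := Real.rpow_nonneg hz.1 α
    have hzM : z ^ α ≤ M ^ α := Real.rpow_le_rpow hz.1 hz.2 hα1.le
    have h1 : ‖-(c * ((1 + α) * z ^ α) + b)‖ ≤ |c * ((1 + α) * z ^ α)| + |b| := by
      rw [Real.norm_eq_abs, abs_neg]
      exact abs_add_le _ _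
    have h2 : |c * ((1 + α) * z ^ α)| = c * ((1 + α) * z ^ α) := by
      apply abs_of_nonneg
      exact mul_nonneg hc.le (mul_nonneg (by linarith) hz0)
    have : ((K : ℝ)) = c * (1 + α) * M ^ α + |b| := rfl
    rw [this]
    rw [h2] at h1
    have h4 : (c * (1 + α)) * z ^ α ≤ (c * (1 + α)) * M ^ α :=
      mul_le_mul_of_nonneg_left hzM (mul_nonneg hc.le (by linarith))
    nlinarith [h4]
  have hlip : LipschitzOnWith K (fun z : ℝ => -(c * z ^ (1 + α) + b * z)) (Icc 0 M) :=
    (convex_Icc 0 M).lipschitzOnWith_of_nnnorm_hasDerivWithin_le hF hbound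
  -- memberships
  have hvmem : ∀ s ∈ Ico (0:ℝ) t, v s ∈ Icc (0:ℝ) M := by
    intro s hs
    refine ⟨hvnn s hs.1, ?_⟩
    have := hCv s (Ico_subset_Icc_self hs)
    rw [Real.norm_eq_abs] at this
    exact le_trans (le_abs_self _) (le_trans this (le_max_left _ _))
  have hwmem : ∀ s ∈ Ico (0:ℝ) t, w s ∈ Icc (0:ℝ) M := by
    intro s hs
    refine ⟨hwnn s hs.1, ?_⟩
    have := hCw s (Ico_subset_Icc_self hs)
    rw [Real.norm_eq_abs] at this
    exact le_trans (le_abs_self _) (le_trans this (le_max_right _ _))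
  have := ODE_solution_unique_of_mem_Icc_right
    (v := fun _ z => -(c * z ^ (1 + α) + b * z)) (s := fun _ => Icc 0 M) (K := K)
    (fun _ _ => hlip) hvc
    (fun s hs => ((hv' s hs.1).mono (Ici_subset_Ici.mpr hs.1)))
    hvmem hwc
    (fun s hs => ((hwderiv s hs.1).mono (Ici_subset_Ici.mpr hs.1)))
    hwmem (by rw [hv0, hw0l])
  exact this ⟨ht, le_refl t⟩
end

section
/- Suppose Grey's condition holds for the branching mechanism φ: there is θ > 0 with φ(z) > 0 for z ≥ θ and ∫_θ^∞ φ(z)^{-1} dz < ∞. Then the map t ↦ v̄_t := lim_{λ→∞} v_t(λ) is finite for all t > 0, is the unique solution of the ODE d v̄_t / dt = -φ(v̄_t) on (0,∞) with singular initial condition v̄_{0+} = ∞, and satisfies ∫_{v̄_t}^∞ φ(z)^{-1} dz = t. -/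
open MeasureTheory Set Filter
open scoped Topology NNReal

section GreyAux

/-- Lipschitz-type bound for the integrand of the branching mechanism. -/
lemma grey_exp_lip {B u : ℝ} (hB : 0 ≤ B) (hu : 0 < u) {z₁ z₂ : ℝ}
    (h1 : z₁ ∈ Icc 0 B) (h2 : z₂ ∈ Icc 0 B) :
    |(Real.exp (-z₁ * u) - 1 + z₁ * u) - (Real.exp (-z₂ * u) - 1 + z₂ * u)| ≤
      max 1 B * min u (u ^ 2) * |z₁ - z₂| := by
  have key : ∀ z ∈ Icc (0:ℝ) B, HasDerivWithinAt (fun z => Real.exp (-z * u) + z * u)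
      (Real.exp (-z * u) * (-1 * u) + 1 * u) (Icc 0 B) z := by
    intro z _
    have hd : HasDerivAt (fun z : ℝ => -z * u) (-1 * u) z :=
      (hasDerivAt_id z).neg.mul_const u
    exact (((Real.hasDerivAt_exp (-z*u)).comp z hd).add
      ((hasDerivAt_id z).mul_const u)).hasDerivWithinAt
  have bound : ∀ z ∈ Icc (0:ℝ) B,
      ‖Real.exp (-z * u) * (-1 * u) + 1 * u‖ ≤ max 1 B * min u (u ^ 2) := by
    intro z hz
    have hz0 : 0 ≤ z := hz.1
    have hzu : 0 ≤ z * u := mul_nonneg hz0 hu.le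
    have he1 : Real.exp (-z * u) ≤ 1 := by
      rw [Real.exp_le_one_iff]
      nlinarith
    have he0 : 0 < Real.exp (-z * u) := Real.exp_pos _
    have he2 : 1 - z * u ≤ Real.exp (-z * u) := by
      have := Real.add_one_le_exp (-(z*u))
      rw [neg_mul]; linarith
    have hval : Real.exp (-z * u) * (-1 * u) + 1 * u = u * (1 - Real.exp (-z*u)) := by ring
    rw [hval, Real.norm_eq_abs, abs_of_nonneg (by nlinarith)]
    rcases le_total u 1 with h | h
    · have hmin : min u (u ^ 2) = u ^ 2 := min_eq_right (by nlinarith)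
      have : u * (1 - Real.exp (-z*u)) ≤ u * (z * u) := by nlinarith
      have hB' : z * u ^ 2 ≤ max 1 B * u ^ 2 := by
        have : z ≤ max 1 B := le_trans hz.2 (le_max_right _ _)
        nlinarith
      rw [hmin]; nlinarith
    · have hmin : min u (u ^ 2) = u := min_eq_left (by nlinarith)
      have h1B : (1:ℝ) ≤ max 1 B := le_max_left _ _
      rw [hmin]; nlinarith
  have := (convex_Icc (0:ℝ) B).norm_image_sub_le_of_norm_hasDerivWithin_le
    key bound h2 h1
  calc |(Real.exp (-z₁ * u) - 1 + z₁ * u) - (Real.exp (-z₂ * u) - 1 + z₂ * u)|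
      = ‖(fun z => Real.exp (-z * u) + z * u) z₁ - (fun z => Real.exp (-z * u) + z * u) z₂‖ := by
        rw [Real.norm_eq_abs]; ring_nf
    _ ≤ max 1 B * min u (u ^ 2) * ‖z₁ - z₂‖ := this
    _ = max 1 B * min u (u ^ 2) * |z₁ - z₂| := by rw [Real.norm_eq_abs]

lemma grey_minuu_integrable (m : Measure ℝ)
    (hm : ∫⁻ u in Ioi (0 : ℝ), ENNReal.ofReal (min u (u ^ 2)) ∂m ≠ ⊤) :
    IntegrableOn (fun u => min u (u ^ 2)) (Ioi (0:ℝ)) m := by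
  constructor
  · exact (continuous_id.min (continuous_pow 2)).aestronglyMeasurable
  · rw [hasFiniteIntegral_iff_ofReal]
    · exact lt_top_iff_ne_top.2 hm
    · refine (ae_restrict_iff' measurableSet_Ioi).2 (Eventually.of_forall fun u hu => ?_)
      have hu' : (0:ℝ) < u := hu
      exact le_min hu'.le (by positivity)

lemma grey_integrand_integrable (m : Measure ℝ)
    (hm : ∫⁻ u in Ioi (0 : ℝ), ENNReal.ofReal (min u (u ^ 2)) ∂m ≠ ⊤)
    {z : ℝ} (hz : 0 ≤ z) :
    IntegrableOn (fun u => Real.exp (-z * u) - 1 + z * u) (Ioi (0:ℝ)) m := by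
  have hmi := grey_minuu_integrable m hm
  refine Integrable.mono' (hmi.const_mul (max 1 z * z)) ?_ ?_
  · apply ContinuousOn.aestronglyMeasurable _ measurableSet_Ioi
    exact (((continuous_const.mul continuous_id).rexp.sub continuous_const).add
      (continuous_const.mul continuous_id)).continuousOn
  · refine (ae_restrict_iff' measurableSet_Ioi).2 (Eventually.of_forall fun u hu => ?_)
    have hu' : (0:ℝ) < u := hu
    have h0 : (Real.exp (-(0:ℝ) * u) - 1 + 0 * u) = 0 := by simp
    have := grey_exp_lip (B := z) hz hu' (z₁ := z) (z₂ := 0)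
      ⟨hz, le_refl z⟩ ⟨le_refl 0, hz⟩
    rw [h0, sub_zero, sub_zero, abs_of_nonneg hz] at this
    rw [Real.norm_eq_abs]
    calc |Real.exp (-z * u) - 1 + z * u| ≤ max 1 z * min u (u ^ 2) * z := this
      _ = max 1 z * z * min u (u ^ 2) := by ring



lemma grey_M0_nonneg (m : Measure ℝ) : 0 ≤ ∫ u in Ioi (0:ℝ), min u (u ^ 2) ∂m := by
  refine setIntegral_nonneg measurableSet_Ioi fun u hu => ?_
  have hu' : (0:ℝ) < u := hu
  exact le_min hu'.le (by positivity)

lemma grey_phi_lip (b c : ℝ) (hc : 0 ≤ c) (m : Measure ℝ)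
    (hm : ∫⁻ u in Ioi (0 : ℝ), ENNReal.ofReal (min u (u ^ 2)) ∂m ≠ ⊤)
    (φ : ℝ → ℝ)
    (hφ : ∀ z : ℝ, φ z =
      b * z + c * z ^ 2 + ∫ u in Ioi (0 : ℝ), (Real.exp (-z * u) - 1 + z * u) ∂m)
    {B : ℝ} (hB : 0 ≤ B) :
    LipschitzOnWith
      (Real.toNNReal (|b| + 2*c*B + max 1 B * ∫ u in Ioi (0:ℝ), min u (u ^ 2) ∂m))
      φ (Icc 0 B) := by
  set M₀ : ℝ := ∫ u in Ioi (0:ℝ), min u (u ^ 2) ∂m with hM₀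
  have hM₀0 : 0 ≤ M₀ := grey_M0_nonneg m
  have hK0 : 0 ≤ |b| + 2*c*B + max 1 B * M₀ := by positivity
  rw [lipschitzOnWith_iff_dist_le_mul]
  intro z₁ h1 z₂ h2
  rw [Real.coe_toNNReal _ hK0, Real.dist_eq, Real.dist_eq]
  have hz10 : 0 ≤ z₁ := h1.1
  have hz20 : 0 ≤ z₂ := h2.1
  have hi1 := grey_integrand_integrable m hm hz10
  have hi2 := grey_integrand_integrable m hm hz20
  have hmi := grey_minuu_integrable m hm
  have hsub : (∫ u in Ioi (0:ℝ), (Real.exp (-z₁ * u) - 1 + z₁ * u) ∂m)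
      - (∫ u in Ioi (0:ℝ), (Real.exp (-z₂ * u) - 1 + z₂ * u) ∂m)
      = ∫ u in Ioi (0:ℝ),
        ((Real.exp (-z₁ * u) - 1 + z₁ * u) - (Real.exp (-z₂ * u) - 1 + z₂ * u)) ∂m :=
    (integral_sub hi1 hi2).symm
  have hbnd : ‖∫ u in Ioi (0:ℝ),
      ((Real.exp (-z₁ * u) - 1 + z₁ * u) - (Real.exp (-z₂ * u) - 1 + z₂ * u)) ∂m‖
      ≤ ∫ u in Ioi (0:ℝ), ((max 1 B * |z₁ - z₂|) * min u (u ^ 2)) ∂m := by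
    refine norm_integral_le_of_norm_le (hmi.const_mul _) ?_
    refine (ae_restrict_iff' measurableSet_Ioi).2 (Eventually.of_forall fun u hu => ?_)
    have hu' : (0:ℝ) < u := hu
    rw [Real.norm_eq_abs]
    calc |(Real.exp (-z₁ * u) - 1 + z₁ * u) - (Real.exp (-z₂ * u) - 1 + z₂ * u)|
        ≤ max 1 B * min u (u ^ 2) * |z₁ - z₂| := grey_exp_lip hB hu' h1 h2
      _ = max 1 B * |z₁ - z₂| * min u (u ^ 2) := by ring
  rw [MeasureTheory.integral_const_mul] at hbnd
  rw [Real.norm_eq_abs] at hbnd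
  have hz12 : |z₁ ^ 2 - z₂ ^ 2| ≤ 2 * B * |z₁ - z₂| := by
    have : z₁ ^ 2 - z₂ ^ 2 = (z₁ + z₂) * (z₁ - z₂) := by ring
    rw [this, abs_mul]
    have : |z₁ + z₂| ≤ 2 * B := by
      rw [abs_of_nonneg (by linarith)]; linarith [h1.2, h2.2]
    exact mul_le_mul_of_nonneg_right this (abs_nonneg _)
  have expand : φ z₁ - φ z₂ = b * (z₁ - z₂) + c * (z₁ ^ 2 - z₂ ^ 2)
      + ((∫ u in Ioi (0:ℝ), (Real.exp (-z₁ * u) - 1 + z₁ * u) ∂m)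
        - ∫ u in Ioi (0:ℝ), (Real.exp (-z₂ * u) - 1 + z₂ * u) ∂m) := by
    rw [hφ z₁, hφ z₂]; ring
  calc |φ z₁ - φ z₂| ≤ |b * (z₁ - z₂)| + |c * (z₁ ^ 2 - z₂ ^ 2)|
        + |(∫ u in Ioi (0:ℝ), (Real.exp (-z₁ * u) - 1 + z₁ * u) ∂m)
          - ∫ u in Ioi (0:ℝ), (Real.exp (-z₂ * u) - 1 + z₂ * u) ∂m| := by
        rw [expand]; exact (abs_add_three _ _ _)
    _ ≤ |b| * |z₁ - z₂| + c * (2 * B * |z₁ - z₂|) + max 1 B * |z₁ - z₂| * M₀ := by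
        refine add_le_add (add_le_add ?_ ?_) ?_
        · rw [abs_mul]
        · rw [abs_mul, abs_of_nonneg hc]
          exact mul_le_mul_of_nonneg_left hz12 hc
        · rw [hsub]; exact hbnd
    _ = (|b| + 2*c*B + max 1 B * M₀) * |z₁ - z₂| := by ring

lemma grey_phi_zero (b c : ℝ) (m : Measure ℝ) (φ : ℝ → ℝ)
    (hφ : ∀ z : ℝ, φ z =
      b * z + c * z ^ 2 + ∫ u in Ioi (0 : ℝ), (Real.exp (-z * u) - 1 + z * u) ∂m) :
    φ 0 = 0 := by
  rw [hφ 0]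
  simp



lemma grey_exists_root (φ : ℝ → ℝ) (θ : ℝ) (hθ : 0 < θ) (hφθ : ∀ z, θ ≤ z → 0 < φ z)
    (hcont : ContinuousOn φ (Ici 0)) (hφ0 : φ 0 = 0) :
    ∃ q, 0 ≤ q ∧ q < θ ∧ (∀ z, q < z → 0 < φ z) ∧ φ q = 0 := by
  set S : Set ℝ := {z ∈ Icc 0 θ | φ z ≤ 0} with hS
  have hS0 : (0:ℝ) ∈ S := ⟨⟨le_refl 0, hθ.le⟩, le_of_eq hφ0⟩
  have hSb : BddAbove S := ⟨θ, fun z hz => hz.1.2⟩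
  have hSc : IsClosed S := by
    have : S = Icc 0 θ ∩ φ ⁻¹' (Iic 0) := rfl
    rw [this]
    exact ContinuousOn.preimage_isClosed_of_isClosed
      (hcont.mono (Icc_subset_Ici_self)) isClosed_Icc isClosed_Iic
  set q := sSup S with hq
  have hqS : q ∈ S := hSc.csSup_mem ⟨0, hS0⟩ hSb
  have hq0 : 0 ≤ q := hqS.1.1
  have hqθ : q < θ := lt_of_le_of_ne hqS.1.2 (fun h => absurd hqS.2 (by rw [h]; exact not_le.2 (hφθ θ le_rfl)))
  have hqpos : ∀ z, q < z → 0 < φ z := by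
    intro z hz
    rcases le_or_gt z θ with h | h
    · by_contra hneg
      exact absurd (le_csSup hSb (⟨⟨le_trans hq0 hz.le, h⟩, not_lt.1 hneg⟩ : z ∈ S)) (not_le.2 hz)
    · exact hφθ z h.le
  refine ⟨q, hq0, hqθ, hqpos, le_antisymm hqS.2 ?_⟩
  have htd : Tendsto φ (𝓝[>] q) (𝓝 (φ q)) :=
    (hcont q hq0).mono (fun z (hz : q < z) => le_trans hq0 hz.le)
  refine ge_of_tendsto htd ?_
  exact eventually_mem_nhdsWithin.mono (fun z hz => (hqpos z hz).le)

variable {φ : ℝ → ℝ} {θ q : ℝ}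

/-- The tail integral of `φ⁻¹`. -/
noncomputable def greyG (φ : ℝ → ℝ) : ℝ → ℝ := fun x => ∫ z in Ioi x, (φ z)⁻¹

section Gfacts

variable (hθ : 0 < θ) (hq0 : 0 ≤ q) (hqθ : q < θ)
  (hqpos : ∀ z, q < z → 0 < φ z)
  (hcontAt : ∀ x : ℝ, 0 < x → ContinuousAt φ x)
  (hint : IntegrableOn (fun z => (φ z)⁻¹) (Ici θ))

include hq0 hqpos hcontAt in
lemma grey_inv_contOn : ContinuousOn (fun z => (φ z)⁻¹) (Ioi q) := by
  intro z hz
  have hz' : (0:ℝ) < z := lt_of_le_of_lt hq0 hz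
  exact ((hcontAt z hz').inv₀ (ne_of_gt (hqpos z hz))).continuousWithinAt

include hθ hq0 hqθ hqpos hcontAt hint in
lemma grey_int_Ioi {a : ℝ} (ha : q < a) :
    IntegrableOn (fun z => (φ z)⁻¹) (Ioi a) := by
  rcases le_or_gt θ a with h | h
  · exact hint.mono_set (fun z hz => le_trans h (le_of_lt hz))
  · have h1 : IntegrableOn (fun z => (φ z)⁻¹) (Icc a θ) :=
      ContinuousOn.integrableOn_Icc
        ((grey_inv_contOn hq0 hqpos hcontAt).mono (fun z hz => lt_of_lt_of_le ha hz.1))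
    rw [← Ioc_union_Ioi_eq_Ioi h.le]
    exact (h1.mono_set Ioc_subset_Icc_self).union (hint.mono_set (fun z hz => mem_Ici.2 (le_of_lt hz)))

include hθ hq0 hqθ hqpos hcontAt hint in
lemma greyG_split {a y : ℝ} (ha : q < a) (hay : a ≤ y) :
    greyG φ a = (∫ z in Ioc a y, (φ z)⁻¹) + greyG φ y := by
  have : Ioi a = Ioc a y ∪ Ioi y := (Ioc_union_Ioi_eq_Ioi hay).symm
  rw [greyG, greyG, this]
  exact setIntegral_union Ioc_disjoint_Ioi_same measurableSet_Ioi
    ((grey_int_Ioi hθ hq0 hqθ hqpos hcontAt hint ha).mono_set Ioc_subset_Ioi_self)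
    (grey_int_Ioi hθ hq0 hqθ hqpos hcontAt hint (lt_of_lt_of_le ha hay))

include hθ hq0 hqθ hqpos hcontAt hint in
lemma greyG_nonneg {x : ℝ} (hx : q < x) : 0 ≤ greyG φ x := by
  refine setIntegral_nonneg measurableSet_Ioi (fun z hz => ?_)
  exact (inv_nonneg).2 (hqpos z (lt_trans hx hz)).le

include hθ hq0 hqθ hqpos hcontAt hint in
lemma greyG_anti {x y : ℝ} (hx : q < x) (hxy : x ≤ y) : greyG φ y ≤ greyG φ x := by
  have h := greyG_split hθ hq0 hqθ hqpos hcontAt hint hx hxy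
  have h2 : 0 ≤ ∫ z in Ioc x y, (φ z)⁻¹ := by
    refine setIntegral_nonneg measurableSet_Ioc (fun z hz => ?_)
    exact (inv_nonneg).2 (hqpos z (lt_of_lt_of_le hx hz.1.le)).le
  linarith

include hθ hq0 hqθ hqpos hcontAt hint in
lemma greyG_intervalIntegrable {a y : ℝ} (ha : q < a) (hay : a ≤ y) :
    IntervalIntegrable (fun z => (φ z)⁻¹) volume a y :=
  (intervalIntegrable_iff_integrableOn_Ioc_of_le hay).2
    ((grey_int_Ioi hθ hq0 hqθ hqpos hcontAt hint ha).mono_set Ioc_subset_Ioi_self)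

include hθ hq0 hqθ hqpos hcontAt hint in
lemma greyG_strictAnti {x y : ℝ} (hx : q < x) (hxy : x < y) : greyG φ y < greyG φ x := by
  have h := greyG_split hθ hq0 hqθ hqpos hcontAt hint hx hxy.le
  have h2 : 0 < ∫ z in Ioc x y, (φ z)⁻¹ := by
    have hpos := intervalIntegral.intervalIntegral_pos_of_pos_on
      (greyG_intervalIntegrable hθ hq0 hqθ hqpos hcontAt hint hx hxy.le)
      (fun z hz => (inv_pos).2 (hqpos z (lt_trans hx hz.1))) hxy
    rwa [intervalIntegral.integral_of_le hxy.le] at hpos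
  linarith

include hθ hq0 hqθ hqpos hcontAt hint in
lemma greyG_hasDeriv {x : ℝ} (hx : q < x) :
    HasDerivAt (greyG φ) (-(φ x)⁻¹) x := by
  set a := (q + x)/2 with hadef
  have ha : q < a := by rw [hadef]; linarith
  have hax : a < x := by rw [hadef]; linarith
  have heq : ∀ y ∈ Ioi a, greyG φ y = greyG φ a - ∫ z in a..y, (φ z)⁻¹ := by
    intro y (hy : a < y)
    rw [intervalIntegral.integral_of_le hy.le]
    have := greyG_split hθ hq0 hqθ hqpos hcontAt hint ha hy.le
    linarith
  have hii : IntervalIntegrable (fun z => (φ z)⁻¹) volume a x :=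
    greyG_intervalIntegrable hθ hq0 hqθ hqpos hcontAt hint ha hax.le
  have hmeas : StronglyMeasurableAtFilter (fun z => (φ z)⁻¹) (𝓝 x) volume :=
    ⟨Ioi a, Ioi_mem_nhds hax,
      ((grey_inv_contOn hq0 hqpos hcontAt).mono (fun z hz => lt_trans ha hz)).aestronglyMeasurable
        measurableSet_Ioi⟩
  have hca : ContinuousAt (fun z => (φ z)⁻¹) x :=
    (hcontAt x (lt_of_le_of_lt hq0 hx)).inv₀ (ne_of_gt (hqpos x hx))
  have hd : HasDerivAt (fun y => greyG φ a - ∫ z in a..y, (φ z)⁻¹) (-(φ x)⁻¹) x :=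
    (intervalIntegral.integral_hasDerivAt_right hii hmeas hca).const_sub (greyG φ a)
  refine hd.congr_of_eventuallyEq ?_
  exact Filter.eventuallyEq_of_mem (Ioi_mem_nhds hax) (fun y hy => heq y hy)

include hθ hq0 hqθ hqpos hcontAt hint in
lemma greyG_tendsto : Tendsto (greyG φ) atTop (𝓝 0) := by
  have hiInter : (⋂ n : ℕ, Ioi (θ + n)) = (∅ : Set ℝ) := by
    rw [eq_empty_iff_forall_notMem]
    intro x hx
    obtain ⟨n, hn⟩ := exists_nat_ge (x - θ)
    exact absurd (mem_iInter.1 hx n) (by simp only [mem_Ioi, not_lt]; linarith)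
  have key : Tendsto (fun n : ℕ => greyG φ (θ + n)) atTop (𝓝 0) := by
    have h := tendsto_setIntegral_of_antitone (μ := volume)
      (f := fun z => (φ z)⁻¹) (s := fun n : ℕ => Ioi (θ + n))
      (fun n => measurableSet_Ioi)
      (fun i j hij => Ioi_subset_Ioi (by have := (Nat.cast_le (α := ℝ)).2 hij; linarith))
      ⟨0, by simpa using grey_int_Ioi hθ hq0 hqθ hqpos hcontAt hint (a := θ + 0) (by simpa using hqθ)⟩
    rwa [hiInter, Measure.restrict_empty, integral_zero_measure] at h
  rw [Metric.tendsto_atTop] at key ⊢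
  intro ε hε
  obtain ⟨N, hN⟩ := key ε hε
  refine ⟨θ + N, fun x hx => ?_⟩
  have hN0 : (0:ℝ) ≤ N := Nat.cast_nonneg N
  have hθN : q < θ + N := by linarith
  have hqx : q < x := lt_of_lt_of_le hθN hx
  have h1 : greyG φ x ≤ greyG φ (θ + N) :=
    greyG_anti hθ hq0 hqθ hqpos hcontAt hint hθN hx
  have h2 : 0 ≤ greyG φ x := greyG_nonneg hθ hq0 hqθ hqpos hcontAt hint hqx
  have h3 := hN N le_rfl
  rw [Real.dist_eq, sub_zero] at h3 ⊢
  rw [abs_of_nonneg h2]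
  rw [abs_of_nonneg (greyG_nonneg hθ hq0 hqθ hqpos hcontAt hint hθN)] at h3
  linarith

end Gfacts
section ODEfacts

variable {v : ℝ → ℝ → ℝ}
  (hφθ' : ∀ z, θ ≤ z → 0 < φ z)
  (hlip : ∀ B : ℝ, 0 ≤ B → ∃ K : ℝ≥0, LipschitzOnWith K φ (Icc 0 B))
  (hv0 : ∀ l, 0 ≤ l → v 0 l = l)
  (hpos : ∀ l, 0 ≤ l → ∀ t, 0 ≤ t → 0 ≤ v t l)
  (hode : ∀ l, 0 ≤ l → ∀ t, 0 ≤ t →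
      HasDerivWithinAt (fun s => v s l) (-φ (v t l)) (Ici 0) t)

include hlip in
lemma grey_neg_lip {B : ℝ} (hB : 0 ≤ B) :
    ∃ K : ℝ≥0, LipschitzOnWith K (fun y => -φ y) (Icc 0 B) := by
  obtain ⟨K, hK⟩ := hlip B hB
  refine ⟨K, LipschitzOnWith.of_dist_le_mul fun x hx y hy => ?_⟩
  have := hK.dist_le_mul x hx y hy
  simpa [Real.dist_eq, abs_sub_comm, neg_sub_neg] using this

include hode in
lemma grey_contv {l : ℝ} (hl : 0 ≤ l) : ContinuousOn (fun s => v s l) (Ici 0) :=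
  fun s hs => (hode l hl s hs).continuousWithinAt

include hφθ' hode in
lemma grey_barrier (hθ : 0 < θ) {l : ℝ} (hl : 0 ≤ l) {x : ℝ} (hx : θ ≤ x)
    {s t : ℝ} (hs : 0 ≤ s) (hst : s ≤ t) (hvs : v s l ≤ x) : v t l ≤ x := by
  by_contra hcon
  push_neg at hcon
  have hst' : s < t := by
    rcases eq_or_lt_of_le hst with h | h
    · exfalso; rw [← h] at hcon; linarith
    · exact h
  set A := {r ∈ Icc s t | v r l ≤ x} with hA
  have hsA : s ∈ A := ⟨left_mem_Icc.2 hst, hvs⟩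
  have hAb : BddAbove A := ⟨t, fun r hr => hr.1.2⟩
  have hcontv : ContinuousOn (fun r => v r l) (Icc s t) :=
    (grey_contv hode hl).mono (fun r hr => le_trans hs hr.1)
  have hAc : IsClosed A :=
    ContinuousOn.preimage_isClosed_of_isClosed hcontv isClosed_Icc isClosed_Iic
  set σ := sSup A with hσdef
  have hσA : σ ∈ A := hAc.csSup_mem ⟨s, hsA⟩ hAb
  have hσt : σ < t := lt_of_le_of_ne hσA.1.2 (fun h => by
    have := hσA.2; rw [h] at this; linarith)
  have hσ0 : 0 ≤ σ := le_trans hs hσA.1.1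
  have hgt : ∀ r, σ < r → r ≤ t → x < v r l := by
    intro r h1 h2
    by_contra hc; push_neg at hc
    exact absurd (le_csSup hAb ⟨⟨le_trans hσA.1.1 h1.le, h2⟩, hc⟩) (not_le.2 h1)
  have hσx : v σ l = x := by
    refine le_antisymm hσA.2 ?_
    have htd : Tendsto (fun r => v r l) (𝓝[>] σ) (𝓝 (v σ l)) :=
      ((hode l hl σ hσ0).continuousWithinAt).mono (fun r (hr : σ < r) => le_trans hσ0 hr.le)
    refine ge_of_tendsto htd ?_
    filter_upwards [Ioc_mem_nhdsGT hσt] with r hr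
    exact (hgt r hr.1 hr.2).le
  have hd : HasDerivWithinAt (fun r => v r l) (-φ x) (Ici σ) σ := by
    have h := (hode l hl σ hσ0).mono (Ici_subset_Ici.2 hσ0)
    rwa [hσx] at h
  rw [hasDerivWithinAt_iff_tendsto_slope, Ici_sdiff_left] at hd
  have hneg : -φ x < 0 := neg_lt_zero.2 (hφθ' x hx)
  have hev1 : ∀ᶠ r in 𝓝[>] σ, slope (fun r => v r l) σ r < 0 :=
    hd.eventually (eventually_lt_nhds hneg)
  have hev2 : ∀ᶠ r in 𝓝[>] σ, r ∈ Ioc σ t :=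
    Filter.eventually_of_mem (Ioc_mem_nhdsGT hσt) fun r hr => hr
  obtain ⟨r, hr1, hr2⟩ := (hev1.and hev2).exists
  have hrσ : σ < r := hr2.1
  have hslope : (v r l - v σ l) / (r - σ) < 0 := by
    have : slope (fun r => v r l) σ r < 0 := hr1
    rwa [slope_def_field] at this
  have hnum : v r l - v σ l < 0 := by
    have hpos' : 0 < r - σ := sub_pos.2 hrσ
    by_contra hge; push_neg at hge
    exact absurd (div_nonneg hge hpos'.le) (not_le.2 hslope)
  exact absurd (by linarith [hσx] : v r l < x) (not_lt.2 (hgt r hr2.1 hr2.2).le)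

include hφθ' hv0 hode in
lemma grey_bound_all (hθ : 0 < θ) {l : ℝ} (hl : 0 ≤ l) {t : ℝ} (ht : 0 ≤ t) :
    v t l ≤ max l θ := by
  refine grey_barrier hφθ' hode hθ hl (le_max_right l θ) le_rfl ht ?_
  rw [hv0 l hl]  -- needs hv0
  exact le_max_left l θ

end ODEfacts

section ODEfacts2

variable {v : ℝ → ℝ → ℝ}
  (hφθ' : ∀ z, θ ≤ z → 0 < φ z)
  (hlip : ∀ B : ℝ, 0 ≤ B → ∃ K : ℝ≥0, LipschitzOnWith K φ (Icc 0 B))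
  (hv0 : ∀ l, 0 ≤ l → v 0 l = l)
  (hpos : ∀ l, 0 ≤ l → ∀ t, 0 ≤ t → 0 ≤ v t l)
  (hode : ∀ l, 0 ≤ l → ∀ t, 0 ≤ t →
      HasDerivWithinAt (fun s => v s l) (-φ (v t l)) (Ici 0) t)
  (hθ : 0 < θ)

include hφθ' hlip hv0 hpos hode hθ in
lemma grey_uniq {l₁ l₂ : ℝ} (hl₁ : 0 ≤ l₁) (hl₂ : 0 ≤ l₂) {s t : ℝ}
    (hs : 0 ≤ s) (hst : s ≤ t) (heq : v s l₁ = v s l₂) : v t l₁ = v t l₂ := by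
  set B := max (max l₁ l₂) θ with hB
  have hB0 : 0 ≤ B := le_trans hθ.le (le_max_right _ _)
  obtain ⟨K, hK⟩ := grey_neg_lip (φ := φ) hlip hB0
  have key := ODE_solution_unique_of_mem_Icc_right
    (v := fun _ y => -φ y) (s := fun _ => Icc 0 B) (K := K) (fun _ _ => hK)
    (f := fun r => v r l₁) (g := fun r => v r l₂) (a := s) (b := t)
    ((grey_contv hode hl₁).mono (fun r hr => le_trans hs hr.1))
    (fun r hr => (hode l₁ hl₁ r (le_trans hs hr.1)).mono
      (Ici_subset_Ici.2 (le_trans hs hr.1)))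
    (fun r hr => ⟨hpos l₁ hl₁ r (le_trans hs hr.1),
      le_trans (grey_bound_all hφθ' hv0 hode hθ hl₁ (le_trans hs hr.1))
        (max_le_max (le_max_left _ _) le_rfl)⟩)
    ((grey_contv hode hl₂).mono (fun r hr => le_trans hs hr.1))
    (fun r hr => (hode l₂ hl₂ r (le_trans hs hr.1)).mono
      (Ici_subset_Ici.2 (le_trans hs hr.1)))
    (fun r hr => ⟨hpos l₂ hl₂ r (le_trans hs hr.1),
      le_trans (grey_bound_all hφθ' hv0 hode hθ hl₂ (le_trans hs hr.1))
        (max_le_max (le_max_right _ _) le_rfl)⟩)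
    heq
  exact key (right_mem_Icc.2 hst)

include hφθ' hlip hv0 hpos hode hθ in
lemma grey_mono_l {l₁ l₂ : ℝ} (hl₁ : 0 ≤ l₁) (hl₁₂ : l₁ ≤ l₂) {t : ℝ} (ht : 0 ≤ t) :
    v t l₁ ≤ v t l₂ := by
  have hl₂ : 0 ≤ l₂ := le_trans hl₁ hl₁₂
  by_contra hcon
  push_neg at hcon
  have ht' : 0 < t := by
    rcases eq_or_lt_of_le ht with h | h
    · exfalso; rw [← h] at hcon; rw [hv0 l₁ hl₁, hv0 l₂ hl₂] at hcon; linarith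
    · exact h
  set A := {r ∈ Icc 0 t | v r l₁ ≤ v r l₂} with hA
  have hsA : (0:ℝ) ∈ A := ⟨left_mem_Icc.2 ht, by rw [hv0 l₁ hl₁, hv0 l₂ hl₂]; exact hl₁₂⟩
  have hAb : BddAbove A := ⟨t, fun r hr => hr.1.2⟩
  have hcont12 : ContinuousOn (fun r => v r l₁ - v r l₂) (Icc 0 t) :=
    ((grey_contv hode hl₁).mono Icc_subset_Ici_self).sub
      ((grey_contv hode hl₂).mono Icc_subset_Ici_self)
  have hAc : IsClosed A := by
    have : A = Icc 0 t ∩ (fun r => v r l₁ - v r l₂) ⁻¹' (Iic 0) := by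
      ext r; simp [hA, sub_nonpos]
    rw [this]
    exact ContinuousOn.preimage_isClosed_of_isClosed hcont12 isClosed_Icc isClosed_Iic
  set σ := sSup A with hσdef
  have hσA : σ ∈ A := hAc.csSup_mem ⟨0, hsA⟩ hAb
  have hσt : σ < t := lt_of_le_of_ne hσA.1.2 (fun h => by
    have := hσA.2; rw [h] at this; linarith)
  have hσ0 : 0 ≤ σ := hσA.1.1
  have hgt : ∀ r, σ < r → r ≤ t → v r l₂ < v r l₁ := by
    intro r h1 h2
    by_contra hc; push_neg at hc
    exact absurd (le_csSup hAb ⟨⟨le_trans hσ0 h1.le, h2⟩, hc⟩) (not_le.2 h1)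
  have hσeq : v σ l₁ = v σ l₂ := by
    refine le_antisymm hσA.2 ?_
    have htd : Tendsto (fun r => v r l₂ - v r l₁) (𝓝[>] σ) (𝓝 (v σ l₂ - v σ l₁)) := by
      refine Tendsto.sub ?_ ?_ <;>
        exact ((hode _ (by assumption) σ hσ0).continuousWithinAt).mono
          (fun r (hr : σ < r) => le_trans hσ0 hr.le)
    have hle : v σ l₂ - v σ l₁ ≤ 0 := by
      refine le_of_tendsto htd ?_
      filter_upwards [Ioc_mem_nhdsGT hσt] with r hr
      linarith [hgt r hr.1 hr.2]
    linarith
  have := grey_uniq hφθ' hlip hv0 hpos hode hθ hl₁ hl₂ hσ0 (le_of_lt hσt) hσeq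
  linarith

include hφθ' hlip hv0 hpos hode hθ in
lemma grey_lip_init {r Y : ℝ} (hr : 0 ≤ r) (hY : 0 ≤ Y) :
    ∃ C : ℝ≥0, LipschitzOnWith C (fun y => v r y) (Icc 0 Y) := by
  set B := max Y θ with hBdef
  have hB0 : 0 ≤ B := le_trans hθ.le (le_max_right _ _)
  obtain ⟨K, hK⟩ := grey_neg_lip (φ := φ) hlip hB0
  refine ⟨Real.toNNReal (Real.exp (K * r)),
    LipschitzOnWith.of_dist_le_mul fun y₁ h1 y₂ h2 => ?_⟩
  have key := dist_le_of_trajectories_ODE_of_mem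
    (v := fun _ y => -φ y) (s := fun _ => Icc 0 B) (K := K) (fun _ _ => hK)
    (f := fun τ => v τ y₁) (g := fun τ => v τ y₂) (a := 0) (b := r) (δ := dist y₁ y₂)
    ((grey_contv hode h1.1).mono (fun τ hτ => hτ.1))
    (fun τ hτ => (hode y₁ h1.1 τ hτ.1).mono (Ici_subset_Ici.2 hτ.1))
    (fun τ hτ => ⟨hpos y₁ h1.1 τ hτ.1,
      le_trans (grey_bound_all hφθ' hv0 hode hθ h1.1 hτ.1) (max_le_max h1.2 le_rfl)⟩)
    ((grey_contv hode h2.1).mono (fun τ hτ => hτ.1))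
    (fun τ hτ => (hode y₂ h2.1 τ hτ.1).mono (Ici_subset_Ici.2 hτ.1))
    (fun τ hτ => ⟨hpos y₂ h2.1 τ hτ.1,
      le_trans (grey_bound_all hφθ' hv0 hode hθ h2.1 hτ.1) (max_le_max h2.2 le_rfl)⟩)
    (le_of_eq (by show dist (v 0 y₁) (v 0 y₂) = _; rw [hv0 y₁ h1.1, hv0 y₂ h2.1]))
    r (right_mem_Icc.2 hr)
  rw [Real.coe_toNNReal _ (Real.exp_nonneg _)]
  calc dist (v r y₁) (v r y₂) ≤ dist y₁ y₂ * Real.exp (↑K * (r - 0)) := key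
    _ = Real.exp (↑K * r) * dist y₁ y₂ := by rw [sub_zero, mul_comm]

include hφθ' hlip hv0 hpos hode hθ in
lemma grey_shift {l : ℝ} (hl : 0 ≤ l) {s : ℝ} (hs : 0 ≤ s) {r : ℝ} (hr : 0 ≤ r) :
    v (s + r) l = v r (v s l) := by
  have hl2 : 0 ≤ v s l := hpos l hl s hs
  set B := max (max l (v s l)) θ with hB
  have hB0 : 0 ≤ B := le_trans hθ.le (le_max_right _ _)
  obtain ⟨K, hK⟩ := grey_neg_lip (φ := φ) hlip hB0
  have hmaps : ∀ τ : ℝ, 0 ≤ τ → (0:ℝ) ≤ s + τ := fun τ hτ => by linarith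
  have hfc : ContinuousOn (fun τ => v (s + τ) l) (Icc 0 r) := by
    refine ContinuousOn.comp (grey_contv hode hl)
      (continuousOn_const.add continuousOn_id) (fun τ hτ => hmaps τ hτ.1)
  have key := ODE_solution_unique_of_mem_Icc_right
    (v := fun _ y => -φ y) (s := fun _ => Icc 0 B) (K := K) (fun _ _ => hK)
    (f := fun τ => v (s + τ) l) (g := fun τ => v τ (v s l)) (a := 0) (b := r)
    hfc
    (fun τ hτ => by
      have hinner := hode l hl (s + τ) (hmaps τ hτ.1)
      have htr : HasDerivWithinAt (fun τ : ℝ => s + τ) 1 (Ici τ) τ :=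
        ((hasDerivAt_id τ).const_add s).hasDerivWithinAt
      have hcomp := HasDerivWithinAt.comp τ hinner htr
        (fun τ' (hτ' : τ ≤ τ') => hmaps τ' (le_trans hτ.1 hτ'))
      rw [mul_one] at hcomp; exact hcomp)
    (fun τ hτ => ⟨hpos l hl (s + τ) (hmaps τ hτ.1),
      le_trans (grey_bound_all hφθ' hv0 hode hθ hl (hmaps τ hτ.1))
        (max_le_max (le_max_left _ _) le_rfl)⟩)
    ((grey_contv hode hl2).mono (fun τ hτ => hτ.1))
    (fun τ hτ => (hode (v s l) hl2 τ hτ.1).mono (Ici_subset_Ici.2 hτ.1))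
    (fun τ hτ => ⟨hpos (v s l) hl2 τ hτ.1,
      le_trans (grey_bound_all hφθ' hv0 hode hθ hl2 hτ.1)
        (max_le_max (le_max_right _ _) le_rfl)⟩)
    (by show v (s + 0) l = v 0 (v s l); rw [add_zero, hv0 (v s l) hl2])
    (right_mem_Icc.2 hr)
  exact key

end ODEfacts2

noncomputable def greyV (v : ℝ → ℝ → ℝ) : ℝ → ℝ := fun t => ⨆ n : ℕ, v t (n:ℝ)

section Main

variable {v : ℝ → ℝ → ℝ}
  (hθ : 0 < θ) (hq0 : 0 ≤ q) (hqθ : q < θ)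
  (hqpos : ∀ z, q < z → 0 < φ z)
  (hφq : φ q = 0)
  (hcontAt : ∀ x : ℝ, 0 < x → ContinuousAt φ x)
  (hint : IntegrableOn (fun z => (φ z)⁻¹) (Ici θ))
  (hφθ' : ∀ z, θ ≤ z → 0 < φ z)
  (hlip : ∀ B : ℝ, 0 ≤ B → ∃ K : ℝ≥0, LipschitzOnWith K φ (Icc 0 B))
  (hv0 : ∀ l, 0 ≤ l → v 0 l = l)
  (hpos : ∀ l, 0 ≤ l → ∀ t, 0 ≤ t → 0 ≤ v t l)
  (hode : ∀ l, 0 ≤ l → ∀ t, 0 ≤ t →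
      HasDerivWithinAt (fun s => v s l) (-φ (v t l)) (Ici 0) t)

include hθ hq0 hqθ hqpos hcontAt hint hφθ' hode in
lemma grey_v_le {t x l : ℝ} (ht : 0 < t) (hx : θ ≤ x) (hGx : greyG φ x < t) (hl : 0 ≤ l) :
    v t l ≤ x := by
  have hqx : q < x := lt_of_lt_of_le hqθ hx
  by_cases hex : ∃ s, 0 ≤ s ∧ s ≤ t ∧ v s l ≤ x
  · obtain ⟨s, h1, h2, h3⟩ := hex
    exact grey_barrier hφθ' hode hθ hl hx h1 h2 h3
  · push_neg at hex
    exfalso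
    have hgt : ∀ s, 0 ≤ s → s ≤ t → x < v s l := hex
    have hvq : ∀ s, 0 ≤ s → s ≤ t → q < v s l := fun s h1 h2 => lt_trans hqx (hgt s h1 h2)
    have hderiv : ∀ s ∈ Ioo 0 t, HasDerivAt (fun r => greyG φ (v r l)) 1 s := by
      intro s hs
      have hvq' := hvq s hs.1.le hs.2.le
      have hG := greyG_hasDeriv hθ hq0 hqθ hqpos hcontAt hint hvq'
      have hv' : HasDerivAt (fun r => v r l) (-φ (v s l)) s :=
        (hode l hl s hs.1.le).hasDerivAt (Ici_mem_nhds hs.1)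
      have hc := hG.comp s hv'
      have hφne : φ (v s l) ≠ 0 := ne_of_gt (hqpos _ hvq')
      have hone : -(φ (v s l))⁻¹ * -φ (v s l) = 1 := by field_simp
      rwa [hone] at hc
    have hcont2 : ContinuousOn (fun r => greyG φ (v r l)) (Icc 0 t) := by
      intro s hs
      have hvq' := hvq s hs.1 hs.2
      exact show ContinuousWithinAt ((fun y => greyG φ y) ∘ (fun r => v r l)) (Icc 0 t) s from
        ((greyG_hasDeriv hθ hq0 hqθ hqpos hcontAt hint
          hvq').continuousAt).comp_continuousWithinAt (f := fun r => v r l) (x := s)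
          (((grey_contv hode hl).mono Icc_subset_Ici_self) s hs)
    obtain ⟨cm, hcm, hslope⟩ := exists_hasDerivAt_eq_slope
      (fun r => greyG φ (v r l)) (fun _ => 1) ht hcont2 hderiv
    have htne : t - 0 ≠ 0 := by simp only [sub_zero]; exact ne_of_gt ht
    rw [eq_div_iff htne, one_mul] at hslope
    have h1 : greyG φ (v t l) ≤ greyG φ x :=
      greyG_anti hθ hq0 hqθ hqpos hcontAt hint hqx (hgt t ht.le le_rfl).le
    have h2 : 0 ≤ greyG φ (v 0 l) :=
      greyG_nonneg hθ hq0 hqθ hqpos hcontAt hint (hvq 0 le_rfl ht.le)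
    linarith

include hθ hq0 hqθ hqpos hcontAt hint in
lemma grey_exists_x {t : ℝ} (ht : 0 < t) : ∃ x, θ ≤ x ∧ greyG φ x < t := by
  have h1 : ∀ᶠ x in atTop, greyG φ x < t :=
    (greyG_tendsto hθ hq0 hqθ hqpos hcontAt hint).eventually (eventually_lt_nhds ht)
  obtain ⟨x, hx1, hx2⟩ := (h1.and (eventually_ge_atTop θ)).exists
  exact ⟨x, hx2, hx1⟩

include hθ hq0 hqθ hqpos hcontAt hint hφθ' hode in
lemma greyV_bdd {t : ℝ} (ht : 0 < t) : BddAbove (range fun n : ℕ => v t (n:ℝ)) := by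
  obtain ⟨x, hx1, hx2⟩ := grey_exists_x hθ hq0 hqθ hqpos hcontAt hint ht
  refine ⟨x, ?_⟩
  rintro _ ⟨n, rfl⟩
  exact grey_v_le hθ hq0 hqθ hqpos hcontAt hint hφθ' hode ht hx1 hx2 (Nat.cast_nonneg n)

include hθ hq0 hqθ hqpos hcontAt hint hφθ' hlip hv0 hpos hode in
lemma grey_v_le_V {t l : ℝ} (ht : 0 < t) (hl : 0 ≤ l) : v t l ≤ greyV v t :=
  le_trans (grey_mono_l hφθ' hlip hv0 hpos hode hθ hl (Nat.le_ceil l) ht.le)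
    (le_ciSup (greyV_bdd hθ hq0 hqθ hqpos hcontAt hint hφθ' hode ht) ⌈l⌉₊)

include hθ hq0 hqθ hqpos hcontAt hint hφθ' hlip hv0 hpos hode in
lemma greyV_nonneg {t : ℝ} (ht : 0 < t) : 0 ≤ greyV v t :=
  le_trans (hpos 0 le_rfl t ht.le)
    (grey_v_le_V hθ hq0 hqθ hqpos hcontAt hint hφθ' hlip hv0 hpos hode ht le_rfl)

include hθ hq0 hqθ hqpos hcontAt hint hφθ' hlip hv0 hpos hode in
lemma greyV_tendsto {t : ℝ} (ht : 0 < t) :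
    Tendsto (fun l => v t l) atTop (𝓝 (greyV v t)) := by
  rw [tendsto_order]
  constructor
  · intro a ha
    obtain ⟨n, hn⟩ :=
      (lt_ciSup_iff (greyV_bdd hθ hq0 hqθ hqpos hcontAt hint hφθ' hode ht)).1 ha
    rw [eventually_atTop]
    exact ⟨(n:ℝ), fun l hl => lt_of_lt_of_le hn
      (grey_mono_l hφθ' hlip hv0 hpos hode hθ (Nat.cast_nonneg n) hl ht.le)⟩
  · intro a ha
    rw [eventually_atTop]
    exact ⟨0, fun l hl => lt_of_le_of_lt
      (grey_v_le_V hθ hq0 hqθ hqpos hcontAt hint hφθ' hlip hv0 hpos hode ht hl) ha⟩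

include hθ hq0 hqθ hqpos hcontAt hint hφθ' hlip hv0 hpos hode in
lemma greyV_flow {s r : ℝ} (hs : 0 < s) (hr : 0 ≤ r) :
    greyV v (s + r) = v r (greyV v s) := by
  have h1 : Tendsto (fun l => v (s + r) l) atTop (𝓝 (greyV v (s + r))) :=
    greyV_tendsto hθ hq0 hqθ hqpos hcontAt hint hφθ' hlip hv0 hpos hode (by linarith)
  have h2 : Tendsto (fun l => v (s + r) l) atTop (𝓝 (v r (greyV v s))) := by
    have heq : ∀ᶠ l in atTop, v (s + r) l = v r (v s l) := by
      rw [eventually_atTop]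
      exact ⟨0, fun l hl => grey_shift hφθ' hlip hv0 hpos hode hθ hl hs.le hr⟩
    rw [tendsto_congr' heq]
    obtain ⟨C, hC⟩ := grey_lip_init (Y := greyV v s) hφθ' hlip hv0 hpos hode hθ hr
      (greyV_nonneg hθ hq0 hqθ hqpos hcontAt hint hφθ' hlip hv0 hpos hode hs)
    have hVmem : greyV v s ∈ Icc 0 (greyV v s) :=
      ⟨greyV_nonneg hθ hq0 hqθ hqpos hcontAt hint hφθ' hlip hv0 hpos hode hs, le_rfl⟩
    have hmem : ∀ᶠ l in atTop, v s l ∈ Icc 0 (greyV v s) := by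
      rw [eventually_atTop]
      exact ⟨0, fun l hl => ⟨hpos l hl s hs.le,
        grey_v_le_V hθ hq0 hqθ hqpos hcontAt hint hφθ' hlip hv0 hpos hode hs hl⟩⟩
    have hts : Tendsto (fun l => v s l) atTop (𝓝[Icc 0 (greyV v s)] (greyV v s)) :=
      tendsto_nhdsWithin_iff.2
        ⟨greyV_tendsto hθ hq0 hqθ hqpos hcontAt hint hφθ' hlip hv0 hpos hode hs, hmem⟩
    exact Filter.Tendsto.comp (hC.continuousOn (greyV v s) hVmem) hts
  exact tendsto_nhds_unique h1 h2

include hθ hq0 hqθ hqpos hcontAt hint hφθ' hlip hv0 hpos hode in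
lemma greyV_deriv {t : ℝ} (ht : 0 < t) :
    HasDerivAt (greyV v) (-φ (greyV v t)) t := by
  set s := t/2 with hsdef
  have hs : 0 < s := by rw [hsdef]; linarith
  have hst : s < t := by rw [hsdef]; linarith
  have hVs0 : 0 ≤ greyV v s :=
    greyV_nonneg hθ hq0 hqθ hqpos hcontAt hint hφθ' hlip hv0 hpos hode hs
  have hinner : HasDerivAt (fun r => v r (greyV v s)) (-φ (v (t - s) (greyV v s))) (t - s) :=
    (hode (greyV v s) hVs0 (t - s) (by linarith)).hasDerivAt (Ici_mem_nhds (by linarith))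
  have htrans : HasDerivAt (fun τ : ℝ => τ - s) 1 t := (hasDerivAt_id t).sub_const s
  have hcomp := HasDerivAt.comp t hinner htrans
  have hVt : v (t - s) (greyV v s) = greyV v t := by
    have := greyV_flow hθ hq0 hqθ hqpos hcontAt hint hφθ' hlip hv0 hpos hode hs
      (r := t - s) (by linarith)
    rw [add_sub_cancel] at this
    exact this.symm
  have heq : greyV v =ᶠ[𝓝 t] fun τ => v (τ - s) (greyV v s) := by
    filter_upwards [Ioi_mem_nhds hst] with τ (hτ : s < τ)
    have := greyV_flow hθ hq0 hqθ hqpos hcontAt hint hφθ' hlip hv0 hpos hode hs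
      (r := τ - s) (by linarith)
    rwa [add_sub_cancel] at this
  have hfinal := hcomp.congr_of_eventuallyEq heq
  rw [hVt, mul_one] at hfinal
  exact hfinal

include hv0 hode in
lemma grey_v_cont0 {l : ℝ} (hl : 0 ≤ l) :
    Tendsto (fun s => v s l) (𝓝[>] (0:ℝ)) (𝓝 l) := by
  have hc : Tendsto (fun s => v s l) (𝓝[Ici 0] (0:ℝ)) (𝓝 (v 0 l)) :=
    (hode l hl 0 le_rfl).continuousWithinAt
  rw [hv0 l hl] at hc
  exact hc.mono_left (nhdsWithin_mono 0 Ioi_subset_Ici_self)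

include hθ hq0 hqθ hqpos hcontAt hint hφθ' hlip hv0 hpos hode in
lemma greyV_top : Tendsto (greyV v) (𝓝[>] (0:ℝ)) atTop := by
  rw [tendsto_atTop]
  intro M
  set l := max (M + 1) 0 with hldef
  have hl : 0 ≤ l := le_max_right _ _
  have hMl : M < l := lt_of_lt_of_le (lt_add_one M) (le_max_left _ _)
  have hev : ∀ᶠ s in 𝓝[>] (0:ℝ), M < v s l :=
    (grey_v_cont0 hv0 hode hl).eventually (eventually_gt_nhds hMl)
  filter_upwards [hev, self_mem_nhdsWithin] with s h1 (h2 : 0 < s)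
  exact le_trans h1.le
    (grey_v_le_V hθ hq0 hqθ hqpos hcontAt hint hφθ' hlip hv0 hpos hode h2 hl)

end Main

section Char

variable {v : ℝ → ℝ → ℝ}
  (hθ : 0 < θ) (hq0 : 0 ≤ q) (hqθ : q < θ)
  (hqpos : ∀ z, q < z → 0 < φ z)
  (hφq : φ q = 0)
  (hcontAt : ∀ x : ℝ, 0 < x → ContinuousAt φ x)
  (hint : IntegrableOn (fun z => (φ z)⁻¹) (Ici θ))
  (hlip : ∀ B : ℝ, 0 ≤ B → ∃ K : ℝ≥0, LipschitzOnWith K φ (Icc 0 B))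

include hθ hq0 hqθ hqpos hφq hcontAt hint hlip in
lemma grey_U (U : ℝ → ℝ) (hU0 : ∀ t, 0 < t → 0 ≤ U t)
    (hUd : ∀ t, 0 < t → HasDerivAt U (-φ (U t)) t)
    (hUtop : Tendsto U (𝓝[>] (0:ℝ)) atTop) :
    ∀ t, 0 < t → q < U t ∧ greyG φ (U t) = t := by
  have hq : ∀ t, 0 < t → q < U t := by
    intro t₀ ht₀
    by_contra hcon; push_neg at hcon
    have hev : ∀ᶠ s in 𝓝[>] (0:ℝ), θ < U s := hUtop.eventually (eventually_gt_atTop θ)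
    obtain ⟨s₀, hs₀θ, hs₀mem⟩ := (hev.and
      (Filter.eventually_of_mem (Ioo_mem_nhdsGT ht₀) fun s hs => hs)).exists
    have hcontU : ContinuousOn U (Icc s₀ t₀) := fun τ hτ =>
      ((hUd τ (lt_of_lt_of_le hs₀mem.1 hτ.1)).continuousAt).continuousWithinAt
    have hsub := intermediate_value_Icc' hs₀mem.2.le hcontU
    have hqmem : q ∈ Icc (U t₀) (U s₀) := ⟨hcon, by linarith⟩
    obtain ⟨σ, hσmem, hσ⟩ := hsub hqmem
    obtain ⟨Bm, hBm⟩ :=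
      (isCompact_Icc (a := s₀) (b := t₀)).exists_bound_of_continuousOn hcontU
    set B := max Bm θ with hBdef
    have hB0 : 0 ≤ B := le_trans hθ.le (le_max_right _ _)
    obtain ⟨K, hK⟩ := grey_neg_lip (φ := φ) hlip hB0
    have key := ODE_solution_unique_of_mem_Icc_left
      (v := fun _ y => -φ y) (s := fun _ => Icc 0 B) (K := K) (fun _ _ => hK)
      (f := U) (g := fun _ => q) (a := s₀) (b := σ)
      (hcontU.mono (Icc_subset_Icc le_rfl hσmem.2))
      (fun τ hτ => (hUd τ (lt_trans hs₀mem.1 hτ.1)).hasDerivWithinAt)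
      (fun τ hτ => ⟨hU0 τ (lt_trans hs₀mem.1 hτ.1), by
        have hb := hBm τ ⟨hτ.1.le, le_trans hτ.2 hσmem.2⟩
        calc U τ ≤ |U τ| := le_abs_self _
          _ ≤ Bm := by rw [← Real.norm_eq_abs]; exact hb
          _ ≤ B := le_max_left _ _⟩)
      continuousOn_const
      (fun τ hτ => by
        show HasDerivWithinAt (fun _ => q) (-φ q) (Iic τ) τ
        rw [hφq, neg_zero]
        exact hasDerivWithinAt_const τ _ q)
      (fun τ hτ => ⟨hq0, le_trans hqθ.le (le_max_right _ _)⟩)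
      hσ
    have hbad := key (left_mem_Icc.2 hσmem.1)
    rw [hbad] at hs₀θ
    linarith
  refine fun t ht => ⟨hq t ht, ?_⟩
  have hGU : ∀ τ, 0 < τ → HasDerivAt (fun r => greyG φ (U r)) 1 τ := by
    intro τ hτ
    have hG := greyG_hasDeriv hθ hq0 hqθ hqpos hcontAt hint (hq τ hτ)
    have hc := hG.comp τ (hUd τ hτ)
    have hφne : φ (U τ) ≠ 0 := ne_of_gt (hqpos _ (hq τ hτ))
    have hone : -(φ (U τ))⁻¹ * -φ (U τ) = 1 := by field_simp
    rwa [hone] at hc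
  have hH : ∀ s, 0 < s → s < t → greyG φ (U s) - s = greyG φ (U t) - t := by
    intro s hs hst
    have hcH : ContinuousOn (fun τ => greyG φ (U τ) - τ) (Icc s t) := fun τ hτ =>
      (((hGU τ (lt_of_lt_of_le hs hτ.1)).sub (hasDerivAt_id τ)).continuousAt).continuousWithinAt
    have hdH : ∀ τ ∈ Ioo s t, HasDerivAt (fun τ => greyG φ (U τ) - τ) 0 τ := by
      intro τ hτ
      have hd := (hGU τ (lt_trans hs hτ.1)).sub (hasDerivAt_id τ)
      rw [sub_self] at hd; exact hd
    obtain ⟨cm, hcm, hsl⟩ := exists_hasDerivAt_eq_slope _ (fun _ => (0:ℝ)) hst hcH hdH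
    have htne : t - s ≠ 0 := ne_of_gt (by linarith)
    rw [eq_div_iff htne, zero_mul] at hsl
    linarith
  have hlim : Tendsto (fun s => greyG φ (U s) - s) (𝓝[>] (0:ℝ)) (𝓝 0) := by
    have h1 : Tendsto (fun s => greyG φ (U s)) (𝓝[>] (0:ℝ)) (𝓝 0) :=
      (greyG_tendsto hθ hq0 hqθ hqpos hcontAt hint).comp hUtop
    have h2 : Tendsto (fun s : ℝ => s) (𝓝[>] (0:ℝ)) (𝓝 0) :=
      tendsto_id.mono_left nhdsWithin_le_nhds
    simpa using h1.sub h2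
  have hev2 : ∀ᶠ s in 𝓝[>] (0:ℝ), greyG φ (U s) - s = greyG φ (U t) - t := by
    filter_upwards [Ioo_mem_nhdsGT ht] with s hs
    exact hH s hs.1 hs.2
  have hconst : Tendsto (fun _ : ℝ => greyG φ (U t) - t) (𝓝[>] (0:ℝ)) (𝓝 0) :=
    hlim.congr' hev2
  have hz := tendsto_nhds_unique hconst tendsto_const_nhds
  linarith

end Char

end GreyAux
/-- Under Grey's condition, `v̄_t = lim_{λ→∞} v_t(λ)` is finite for `t > 0`,
satisfies `∫_{v̄_t}^∞ φ(z)⁻¹ dz = t`, and is the unique positive solution of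
`d v̄_t/dt = -φ(v̄_t)` with singular initial condition `v̄_{0+} = ∞`. -/
theorem grey_condition_vbar
    (b c : ℝ) (hc : 0 ≤ c) (m : Measure ℝ)
    (hm : ∫⁻ u in Ioi (0 : ℝ), ENNReal.ofReal (min u (u ^ 2)) ∂m ≠ ⊤)
    (φ : ℝ → ℝ)
    (hφ : ∀ z : ℝ, φ z =
      b * z + c * z ^ 2 + ∫ u in Ioi (0 : ℝ), (Real.exp (-z * u) - 1 + z * u) ∂m)
    (θ : ℝ) (hθ : 0 < θ) (hφθ : ∀ z, θ ≤ z → 0 < φ z)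
    (hint : IntegrableOn (fun z => (φ z)⁻¹) (Ici θ))
    (v : ℝ → ℝ → ℝ)
    (hv0 : ∀ l, 0 ≤ l → v 0 l = l)
    (hpos : ∀ l, 0 ≤ l → ∀ t, 0 ≤ t → 0 ≤ v t l)
    (hode : ∀ l, 0 ≤ l → ∀ t, 0 ≤ t →
      HasDerivWithinAt (fun s => v s l) (-φ (v t l)) (Ici 0) t) :
    ∃ V : ℝ → ℝ,
      (∀ t, 0 < t → Tendsto (fun l => v t l) atTop (nhds (V t))) ∧
      (∀ t, 0 < t → (∫ z in Ioi (V t), (φ z)⁻¹) = t) ∧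
      (∀ t, 0 < t → HasDerivAt V (-φ (V t)) t) ∧
      Tendsto V (nhdsWithin 0 (Ioi 0)) atTop ∧
      (∀ W : ℝ → ℝ, (∀ t, 0 < t → 0 ≤ W t) →
        (∀ t, 0 < t → HasDerivAt W (-φ (W t)) t) →
        Tendsto W (nhdsWithin 0 (Ioi 0)) atTop →
        ∀ t, 0 < t → W t = V t) := by
  have hφ0 : φ 0 = 0 := grey_phi_zero b c m φ hφ
  have hlip : ∀ B : ℝ, 0 ≤ B → ∃ K : ℝ≥0, LipschitzOnWith K φ (Icc 0 B) :=
    fun B hB => ⟨_, grey_phi_lip b c hc m hm φ hφ hB⟩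
  have hcontAt : ∀ x : ℝ, 0 < x → ContinuousAt φ x := by
    intro x hx
    obtain ⟨K, hK⟩ := hlip (x + 1) (by linarith)
    exact (hK.continuousOn.continuousWithinAt ⟨hx.le, by linarith⟩).continuousAt
      (Icc_mem_nhds hx (by linarith))
  have hcont : ContinuousOn φ (Ici 0) := by
    intro x hx
    have hx' : (0:ℝ) ≤ x := hx
    obtain ⟨K, hK⟩ := hlip (x + 1) (by linarith)
    have h1 : ContinuousWithinAt φ (Icc 0 (x+1)) x :=
      hK.continuousOn.continuousWithinAt ⟨hx', by linarith⟩
    refine h1.mono_of_mem_nhdsWithin ?_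
    rw [show Icc (0:ℝ) (x+1) = Ici 0 ∩ Iic (x+1) from (Ici_inter_Iic).symm]
    exact Filter.inter_mem self_mem_nhdsWithin
      (mem_nhdsWithin_of_mem_nhds (Iic_mem_nhds (by linarith)))
  obtain ⟨q, hq0, hqθ, hqpos, hφq⟩ := grey_exists_root φ θ hθ hφθ hcont hφ0
  have hVfacts := grey_U hθ hq0 hqθ hqpos hφq hcontAt hint hlip (greyV v)
    (fun t ht => greyV_nonneg hθ hq0 hqθ hqpos hcontAt hint hφθ hlip hv0 hpos hode ht)
    (fun t ht => greyV_deriv hθ hq0 hqθ hqpos hcontAt hint hφθ hlip hv0 hpos hode ht)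
    (greyV_top hθ hq0 hqθ hqpos hcontAt hint hφθ hlip hv0 hpos hode)
  refine ⟨greyV v, ?_, ?_, ?_, ?_, ?_⟩
  · exact fun t ht => greyV_tendsto hθ hq0 hqθ hqpos hcontAt hint hφθ hlip hv0 hpos hode ht
  · exact fun t ht => (hVfacts t ht).2
  · exact fun t ht => greyV_deriv hθ hq0 hqθ hqpos hcontAt hint hφθ hlip hv0 hpos hode ht
  · exact greyV_top hθ hq0 hqθ hqpos hcontAt hint hφθ hlip hv0 hpos hode
  · intro W hW0 hWd hWtop t ht
    have hV := hVfacts t ht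
    have hW := grey_U hθ hq0 hqθ hqpos hφq hcontAt hint hlip W hW0 hWd hWtop t ht
    by_contra hne
    rcases lt_or_gt_of_ne hne with h | h
    · have hlt := greyG_strictAnti hθ hq0 hqθ hqpos hcontAt hint hW.1 h
      rw [hV.2, hW.2] at hlt
      exact lt_irrefl t hlt
    · have hlt := greyG_strictAnti hθ hq0 hqθ hqpos hcontAt hint hV.1 h
      rw [hV.2, hW.2] at hlt
      exact lt_irrefl t hlt
end

section
/- Let φ be a branching mechanism with δ := φ'(∞) < ∞. Then c = 0, φ(λ) = δλ + ∫_{(0,∞)}(e^{-λz}-1) m(dz), and the cumulant semigroup satisfies v_t(λ) = e^{-δt} λ + ∫_0^t e^{-δs} ∫_{(0,∞)} (1 - e^{-u v_{t-s}(λ)}) m(du) ds for all t ≥ 0, λ ≥ 0. -/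
open MeasureTheory Set Filter
open scoped ENNReal NNReal Topology

lemma aux_exp_nonneg (y : ℝ) : 0 ≤ Real.exp (-y) - 1 + y := by
  nlinarith [Real.add_one_le_exp (-y)]

lemma aux_one_sub_exp_le (y : ℝ) : 1 - Real.exp (-y) ≤ y := by
  nlinarith [Real.add_one_le_exp (-y)]

lemma aux_one_sub_exp_nonneg {y : ℝ} (hy : 0 ≤ y) : 0 ≤ 1 - Real.exp (-y) := by
  have := Real.exp_le_one_iff.2 (by linarith : -y ≤ 0)
  linarith

/-- `e^{-y} - 1 + y ≤ y^2/2` for `y ≥ 0`. -/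
lemma aux_exp_quad {y : ℝ} (hy : 0 ≤ y) : Real.exp (-y) - 1 + y ≤ y ^ 2 / 2 := by
  set f : ℝ → ℝ := fun x => x ^ 2 / 2 - (Real.exp (-x) - 1 + x) with hf
  have hderiv : ∀ x : ℝ, HasDerivAt f (x - (1 - Real.exp (-x))) x := by
    intro x
    have h1 : HasDerivAt (fun x : ℝ => Real.exp (-x)) (-Real.exp (-x)) x := by
      simpa using (hasDerivAt_neg x).exp
    have h2 : HasDerivAt (fun x : ℝ => x ^ 2 / 2) x x := by
      simpa using ((hasDerivAt_pow 2 x).div_const 2)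
    have := h2.sub ((h1.sub_const 1).add (hasDerivAt_id x))
    exact this.congr_deriv (by ring)
  have key : ∫ x in (0:ℝ)..y, (x - (1 - Real.exp (-x))) = f y - f 0 := by
    apply intervalIntegral.integral_eq_sub_of_hasDerivAt
    · intro x _; exact hderiv x
    · apply Continuous.intervalIntegrable
      continuity
  have hnn : 0 ≤ ∫ x in (0:ℝ)..y, (x - (1 - Real.exp (-x))) := by
    apply intervalIntegral.integral_nonneg hy
    intro x hx
    have := aux_one_sub_exp_le x
    linarith [hx.1]
  rw [key] at hnn
  simp only [hf] at hnn
  simp only [neg_zero, Real.exp_zero] at hnn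
  nlinarith

/-- Quadratic bound: for `0 ≤ x ≤ X` and `u > 0`,
`|e^{-xu} - 1 + xu| ≤ (X^2+X) * min u u²`. -/
lemma aux_F_bound {x X u : ℝ} (hx0 : 0 ≤ x) (hxX : x ≤ X) (hu : 0 < u) :
    |Real.exp (-(x * u)) - 1 + x * u| ≤ (X ^ 2 + X) * min u (u ^ 2) := by
  have hxu : 0 ≤ x * u := mul_nonneg hx0 hu.le
  rw [abs_of_nonneg (aux_exp_nonneg (x * u))]
  rcases le_total u 1 with h1 | h1
  · have hmin : min u (u ^ 2) = u ^ 2 := min_eq_right (by nlinarith)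
    rw [hmin]
    have h2 := aux_exp_quad hxu
    have h3 : x * x ≤ X * X := mul_le_mul hxX hxX hx0 (hx0.trans hxX)
    nlinarith [sq_nonneg u, mul_nonneg (mul_nonneg hx0 hu.le) hu.le]
  · have hmin : min u (u ^ 2) = u := min_eq_left (by nlinarith)
    rw [hmin]
    have h2 : Real.exp (-(x * u)) ≤ 1 := Real.exp_le_one_iff.2 (by linarith)
    nlinarith

/-- Derivative bound: for `0 ≤ x ≤ X` and `u > 0`,
`|u (1 - e^{-xu})| ≤ (X+1) * min u u²`. -/
lemma aux_F'_bound {x X u : ℝ} (hx0 : 0 ≤ x) (hxX : x ≤ X) (hu : 0 < u) :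
    |u * (1 - Real.exp (-(x * u)))| ≤ (X + 1) * min u (u ^ 2) := by
  have hxu : 0 ≤ x * u := mul_nonneg hx0 hu.le
  have h0 : 0 ≤ 1 - Real.exp (-(x * u)) := aux_one_sub_exp_nonneg hxu
  have hle : 1 - Real.exp (-(x * u)) ≤ x * u := aux_one_sub_exp_le _
  have h1' : Real.exp (-(x*u)) ≤ 1 := Real.exp_le_one_iff.2 (by linarith)
  rw [abs_of_nonneg (mul_nonneg hu.le h0)]
  rcases le_total u 1 with h1 | h1
  · have hmin : min u (u ^ 2) = u ^ 2 := min_eq_right (by nlinarith)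
    rw [hmin]
    have he : 0 < Real.exp (-(x * u)) := Real.exp_pos _
    have h4 : u * (1 - Real.exp (-(x * u))) ≤ u * 1 :=
      mul_le_mul_of_nonneg_left (by linarith) (by linarith)
    nlinarith
  · have hmin : min u (u ^ 2) = u := min_eq_left (by nlinarith)
    rw [hmin]
    have he : 0 < Real.exp (-(x * u)) := Real.exp_pos _
    have h4 : u * (1 - Real.exp (-(x * u))) ≤ u * 1 :=
      mul_le_mul_of_nonneg_left (by linarith) (by linarith)
    nlinarith

/-- If `δ := φ'(∞) < ∞`, then `c = 0`, `φ(λ) = δλ + ∫ (e^{-λz} - 1) m(dz)` and the cumulant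
semigroup satisfies
`v_t(λ) = e^{-δt} λ + ∫_0^t e^{-δs} ∫ (1 - e^{-u v_{t-s}(λ)}) m(du) ds`. -/
theorem finite_derivative_cumulant_representation
    (b c : ℝ) (hc : 0 ≤ c) (m : Measure ℝ)
    (hm : ∫⁻ u in Ioi (0 : ℝ), ENNReal.ofReal (min u (u ^ 2)) ∂m ≠ ⊤)
    (φ : ℝ → ℝ)
    (hφ : ∀ z : ℝ, φ z =
      b * z + c * z ^ 2 + ∫ u in Ioi (0 : ℝ), (Real.exp (-z * u) - 1 + z * u) ∂m)
    (δ : ℝ) (hδ : Tendsto (fun z => deriv φ z) atTop (nhds δ))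
    (v : ℝ → ℝ → ℝ)
    (hcont : ∀ l, 0 ≤ l → ContinuousOn (fun t => v t l) (Ici 0))
    (hpos : ∀ l, 0 ≤ l → ∀ t, 0 ≤ t → 0 ≤ v t l)
    (heq : ∀ l, 0 ≤ l → ∀ t, 0 ≤ t → v t l = l - ∫ s in (0 : ℝ)..t, φ (v s l)) :
    c = 0 ∧
    (∀ l, 0 ≤ l →
      φ l = δ * l + ∫ u in Ioi (0 : ℝ), (Real.exp (-l * u) - 1) ∂m) ∧
    (∀ t, 0 ≤ t → ∀ l, 0 ≤ l →
      v t l = Real.exp (-δ * t) * l +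
        ∫ s in (0 : ℝ)..t, Real.exp (-δ * s) *
          ∫ u in Ioi (0 : ℝ), (1 - Real.exp (-u * v (t - s) l)) ∂m) := by
  set μ := m.restrict (Ioi (0 : ℝ)) with hμ
  have hμmem : ∀ᵐ u ∂μ, u ∈ Ioi (0 : ℝ) := ae_restrict_mem measurableSet_Ioi
  -- integrability of min u u²
  have hmin_int : Integrable (fun u => min u (u ^ 2)) μ := by
    refine ⟨(continuous_id.min (continuous_pow 2)).aestronglyMeasurable, ?_⟩
    rw [hasFiniteIntegral_iff_ofReal
      (hμmem.mono fun u hu => le_min hu.le (by positivity))]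
    exact hm.lt_top
  -- integrability from a min-bound
  have hint_of_bound : ∀ (C : ℝ) (f : ℝ → ℝ), Continuous f →
      (∀ u ∈ Ioi (0:ℝ), ‖f u‖ ≤ C * min u (u ^ 2)) → Integrable f μ := by
    intro C f hf hb
    refine (hmin_int.const_mul C).mono' hf.aestronglyMeasurable ?_
    filter_upwards [hμmem] with u hu
    exact (hb u hu)
  -- integrability of the Lévy integrand
  have hF_int : ∀ z : ℝ, 0 ≤ z →
      Integrable (fun u => Real.exp (-z * u) - 1 + z * u) μ := by
    intro z hz
    refine hint_of_bound (z ^ 2 + z) _ (by fun_prop) ?_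
    intro u hu
    have := aux_F_bound hz (le_refl z) hu
    rw [Real.norm_eq_abs]
    simpa [neg_mul] using this
  have hF'_int : ∀ z : ℝ, 0 ≤ z →
      Integrable (fun u => u * (1 - Real.exp (-z * u))) μ := by
    intro z hz
    refine hint_of_bound (z + 1) _ (by fun_prop) ?_
    intro u hu
    have := aux_F'_bound hz (le_refl z) hu
    rw [Real.norm_eq_abs]
    simpa [neg_mul] using this
  -- the derivative of φ
  set I : ℝ → ℝ := fun z => ∫ u, u * (1 - Real.exp (-z * u)) ∂μ with hI
  have hderiv : ∀ z : ℝ, 0 < z → HasDerivAt φ (b + 2 * c * z + I z) z := by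
    intro z hz
    have hball : ∀ x ∈ Metric.ball z (z / 2), 0 ≤ x ∧ x ≤ 2 * z := by
      intro x hx
      rw [Metric.mem_ball, Real.dist_eq, abs_lt] at hx
      constructor <;> linarith [hx.1, hx.2]
    have key := hasDerivAt_integral_of_dominated_loc_of_deriv_le (μ := μ)
      (F := fun x u => Real.exp (-x * u) - 1 + x * u)
      (F' := fun x u => u * (1 - Real.exp (-x * u)))
      (x₀ := z) (s := Metric.ball z (z / 2)) (bound := fun u => (2 * z + 1) * min u (u ^ 2))
      (Metric.ball_mem_nhds z (by positivity))
      (Eventually.of_forall fun x =>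
        (by fun_prop : Continuous fun u : ℝ =>
          Real.exp (-x * u) - 1 + x * u).aestronglyMeasurable)
      (hF_int z hz.le)
      ((by fun_prop : Continuous fun u : ℝ =>
        u * (1 - Real.exp (-z * u))).aestronglyMeasurable)
      ?_ (hmin_int.const_mul _) ?_
    · have hφfun : φ = fun x => b * x + c * x ^ 2
          + ∫ u, (Real.exp (-x * u) - 1 + x * u) ∂μ := funext hφ
      rw [hφfun]
      have h1 : HasDerivAt (fun x : ℝ => b * x) b z := by
        simpa using (hasDerivAt_id z).const_mul b
      have h2 : HasDerivAt (fun x : ℝ => c * x ^ 2) (c * (2 * z)) z := by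
        simpa using (hasDerivAt_pow 2 z).const_mul c
      have h3 := (h1.add h2).add key.2
      exact h3.congr_deriv (by ring)
    · filter_upwards [hμmem] with u hu
      intro x hx
      obtain ⟨hx0, hx2⟩ := hball x hx
      have := aux_F'_bound hx0 hx2 hu
      rw [Real.norm_eq_abs]
      simpa [neg_mul] using this
    · filter_upwards [hμmem] with u hu
      intro x hx
      have h1 : HasDerivAt (fun x : ℝ => -x * u) (-u) x := by
        simpa using ((hasDerivAt_id x).neg.mul_const u)
      have h2 := h1.exp
      have h3 := (h2.sub_const 1).add ((hasDerivAt_id x).mul_const u)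
      exact h3.congr_deriv (by ring)
  have hI_nonneg : ∀ z : ℝ, 0 ≤ z → 0 ≤ I z := by
    intro z hz
    apply integral_nonneg_of_ae
    filter_upwards [hμmem] with u hu
    have : 0 ≤ 1 - Real.exp (-(z * u)) :=
      aux_one_sub_exp_nonneg (mul_nonneg hz hu.le)
    have := mul_nonneg hu.le this
    simpa [neg_mul] using this
  have hderiv_eq : ∀ᶠ z in atTop, deriv φ z = b + 2 * c * z + I z := by
    filter_upwards [eventually_gt_atTop (0:ℝ)] with z hz
    exact (hderiv z hz).deriv
  -- c = 0
  have hc0 : c = 0 := by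
    by_contra hne
    have hcpos : 0 < c := lt_of_le_of_ne hc (Ne.symm hne)
    have h1 : ∀ᶠ z in atTop, deriv φ z < δ + 1 :=
      hδ.eventually_lt_const (by linarith)
    have h2 : ∀ᶠ z in atTop, δ + 1 ≤ b + 2 * c * z := by
      filter_upwards [eventually_ge_atTop ((δ + 1 - b) / (2 * c))] with z hz
      have := (div_le_iff₀ (by linarith : (0:ℝ) < 2 * c)).1 hz
      linarith
    obtain ⟨z, hz1, hz2, hz3, hz4⟩ :=
      (h1.and (h2.and (hderiv_eq.and (eventually_gt_atTop (0:ℝ))))).exists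
    have := hI_nonneg z hz4.le
    rw [hz3] at hz1
    linarith
  -- I tends to δ - b, ∫ u dμ = δ - b
  have hItend : Tendsto (fun n : ℕ => I n) atTop (𝓝 (δ - b)) := by
    have h1 : Tendsto (fun n : ℕ => deriv φ n) atTop (𝓝 δ) :=
      hδ.comp tendsto_natCast_atTop_atTop
    have h2 : ∀ᶠ n : ℕ in atTop, deriv φ (n : ℝ) = b + 2 * c * n + I n :=
      tendsto_natCast_atTop_atTop.eventually hderiv_eq
    have h3 : (fun n : ℕ => deriv φ n - b) =ᶠ[atTop] fun n : ℕ => I n := by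
      filter_upwards [h2] with n hn
      rw [hn, hc0]; ring
    exact Tendsto.congr' h3 (h1.sub_const b)
  have hdb : 0 ≤ δ - b := by
    refine ge_of_tendsto hItend ?_
    filter_upwards [eventually_ge_atTop 1] with n hn
    exact hI_nonneg n (by positivity)
  have hulim : ∫⁻ u, ENNReal.ofReal u ∂μ = ENNReal.ofReal (δ - b) := by
    have hmeas : ∀ n : ℕ, AEMeasurable
        (fun u => ENNReal.ofReal (u * (1 - Real.exp (-(n : ℝ) * u)))) μ := by
      intro n
      exact (ENNReal.measurable_ofReal.comp
        (by fun_prop : Measurable fun u : ℝ =>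
          u * (1 - Real.exp (-(n : ℝ) * u)))).aemeasurable
    have hmono : ∀ᵐ u ∂μ, Monotone fun n : ℕ =>
        ENNReal.ofReal (u * (1 - Real.exp (-(n : ℝ) * u))) := by
      filter_upwards [hμmem] with u hu
      intro i j hij
      apply ENNReal.ofReal_le_ofReal
      have hij' : (i : ℝ) ≤ j := Nat.cast_le.2 hij
      have hexp : Real.exp (-(j : ℝ) * u) ≤ Real.exp (-(i : ℝ) * u) := by
        apply Real.exp_le_exp.2
        nlinarith [(mem_Ioi.1 hu).le]
      nlinarith [(mem_Ioi.1 hu).le]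
    have htend : ∀ᵐ u ∂μ, Tendsto
        (fun n : ℕ => ENNReal.ofReal (u * (1 - Real.exp (-(n : ℝ) * u))))
        atTop (𝓝 (ENNReal.ofReal u)) := by
      filter_upwards [hμmem] with u hu
      apply ENNReal.tendsto_ofReal
      have h1 : Tendsto (fun n : ℕ => (n : ℝ) * u) atTop atTop :=
        Tendsto.atTop_mul_const hu tendsto_natCast_atTop_atTop
      have h0 := Real.tendsto_exp_atBot.comp (tendsto_neg_atTop_atBot.comp h1)
      have h0' : Tendsto (fun n : ℕ => Real.exp (-(n : ℝ) * u)) atTop (𝓝 0) := by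
        simpa [Function.comp_def, neg_mul] using h0
      have hone : Tendsto (fun _ : ℕ => (1:ℝ)) atTop (𝓝 1) := tendsto_const_nhds
      have := (hone.sub h0').const_mul u
      simpa using this
    have hL := lintegral_tendsto_of_tendsto_of_monotone hmeas hmono htend
    have heqn : ∀ n : ℕ, ∫⁻ u, ENNReal.ofReal (u * (1 - Real.exp (-(n : ℝ) * u))) ∂μ
        = ENNReal.ofReal (I n) := by
      intro n
      rw [← ofReal_integral_eq_lintegral_ofReal (hF'_int n (Nat.cast_nonneg n))]
      filter_upwards [hμmem] with u hu
      have := aux_one_sub_exp_nonneg (mul_nonneg (Nat.cast_nonneg n : (0:ℝ) ≤ n) hu.le)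
      have h2 : 0 ≤ 1 - Real.exp (-(n : ℝ) * u) := by simpa [neg_mul] using this
      exact mul_nonneg hu.le h2
    have hR : Tendsto (fun n : ℕ =>
        ∫⁻ u, ENNReal.ofReal (u * (1 - Real.exp (-(n : ℝ) * u))) ∂μ)
        atTop (𝓝 (ENNReal.ofReal (δ - b))) := by
      simp_rw [heqn]
      exact ENNReal.tendsto_ofReal hItend
    exact tendsto_nhds_unique hL hR
  have hu_int : Integrable (fun u => u) μ := by
    refine ⟨continuous_id.aestronglyMeasurable, ?_⟩
    rw [hasFiniteIntegral_iff_ofReal (hμmem.mono fun u hu => hu.le), hulim]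
    exact ENNReal.ofReal_lt_top
  have hu_val : ∫ u, u ∂μ = δ - b := by
    rw [integral_eq_lintegral_of_nonneg_ae (f := fun u : ℝ => u)
      (hμmem.mono fun u hu => hu.le) continuous_id.aestronglyMeasurable]
    rw [show ∫⁻ u, ENNReal.ofReal u ∂μ = ENNReal.ofReal (δ - b) from hulim]
    exact ENNReal.toReal_ofReal hdb
  -- the representation of φ
  have hexp_int : ∀ l : ℝ, 0 ≤ l → Integrable (fun u => Real.exp (-l * u) - 1) μ := by
    intro l hl
    refine (hu_int.const_mul l).mono'
      ((by fun_prop : Continuous fun u : ℝ => Real.exp (-l * u) - 1)).aestronglyMeasurable ?_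
    filter_upwards [hμmem] with u hu
    rw [Real.norm_eq_abs, abs_sub_comm, abs_of_nonneg]
    · simpa [neg_mul] using aux_one_sub_exp_le (l * u)
    · have := aux_one_sub_exp_nonneg (mul_nonneg hl hu.le)
      simpa [neg_mul] using this
  have hrep : ∀ l : ℝ, 0 ≤ l →
      φ l = δ * l + ∫ u, (Real.exp (-l * u) - 1) ∂μ := by
    intro l hl
    have hsplit : ∫ u, (Real.exp (-l * u) - 1 + l * u) ∂μ
        = (∫ u, (Real.exp (-l * u) - 1) ∂μ) + ∫ u, l * u ∂μ :=
      integral_add (hexp_int l hl) (hu_int.const_mul l)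
    have h2 : ∫ u, l * u ∂μ = l * (δ - b) := by
      rw [integral_const_mul, hu_val]
    rw [hφ l, hc0, hsplit, h2]
    ring
  refine ⟨hc0, hrep, ?_⟩
  -- Part 3
  have hφcont : ∀ M : ℝ, 0 ≤ M → ContinuousOn φ (Icc 0 M) := by
    intro M hM
    have hφfun : φ = fun x => b * x + c * x ^ 2
        + ∫ u, (Real.exp (-x * u) - 1 + x * u) ∂μ := funext hφ
    rw [hφfun]
    apply ContinuousOn.add
    · exact ((continuous_const.mul continuous_id).add
        (continuous_const.mul (continuous_pow 2))).continuousOn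
    · apply continuousOn_of_dominated (bound := fun u => (M ^ 2 + M) * min u (u ^ 2))
      · intro x hx
        exact (by fun_prop : Continuous fun u : ℝ =>
          Real.exp (-x * u) - 1 + x * u).aestronglyMeasurable
      · intro x hx
        filter_upwards [hμmem] with u hu
        have := aux_F_bound hx.1 hx.2 hu
        rw [Real.norm_eq_abs]
        simpa [neg_mul] using this
      · exact hmin_int.const_mul _
      · filter_upwards with u
        exact (by fun_prop : Continuous fun x : ℝ =>
          Real.exp (-x * u) - 1 + x * u).continuousOn
  intro t ht l hl
  set w : ℝ → ℝ := fun s => v s l with hw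
  set ψ : ℝ → ℝ := fun x => ∫ u, (1 - Real.exp (-u * x)) ∂μ with hψ
  have hψφ : ∀ x : ℝ, 0 ≤ x → ψ x = δ * x - φ x := by
    intro x hx
    have hfun : (fun u => 1 - Real.exp (-u * x)) = fun u => -(Real.exp (-x * u) - 1) := by
      funext u
      rw [show -u * x = -x * u by ring]
      ring
    rw [hψ]
    simp only [hfun]
    rw [integral_neg, hrep x hx]
    ring
  have hwcont : ContinuousOn w (Icc 0 t) := (hcont l hl).mono Icc_subset_Ici_self
  have hwpos : ∀ s ∈ Icc (0:ℝ) t, 0 ≤ w s := fun s hs => hpos l hl s hs.1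
  obtain ⟨C, hC⟩ := isCompact_Icc.exists_bound_of_continuousOn hwcont
  have hMn : (0:ℝ) ≤ max C 0 := le_max_right _ _
  have hwM : ∀ s ∈ Icc (0:ℝ) t, w s ∈ Icc (0:ℝ) (max C 0) := by
    intro s hs
    refine ⟨hwpos s hs, ?_⟩
    have h1 := hC s hs
    rw [Real.norm_eq_abs] at h1
    exact (le_abs_self _).trans (h1.trans (le_max_left _ _))
  have hφw : ContinuousOn (fun s => φ (w s)) (Icc 0 t) :=
    (hφcont _ hMn).comp hwcont hwM
  have hwderiv : ∀ s ∈ Ioo (0:ℝ) t, HasDerivAt w (-φ (w s)) s := by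
    intro s hs
    have hInt : IntervalIntegrable (fun x => φ (w x)) volume 0 s := by
      apply ContinuousOn.intervalIntegrable
      rw [uIcc_of_le hs.1.le]
      exact hφw.mono (Icc_subset_Icc le_rfl hs.2.le)
    have hmeasAt : StronglyMeasurableAtFilter (fun x => φ (w x)) (𝓝 s) volume :=
      ContinuousOn.stronglyMeasurableAtFilter isOpen_Ioo
        (hφw.mono Ioo_subset_Icc_self) s hs
    have hcontAt : ContinuousAt (fun x => φ (w x)) s :=
      hφw.continuousAt (Icc_mem_nhds hs.1 hs.2)
    have hID := intervalIntegral.integral_hasDerivAt_right hInt hmeasAt hcontAt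
    have hev : w =ᶠ[𝓝 s] fun s' => l - ∫ x in (0:ℝ)..s', φ (w x) := by
      filter_upwards [Ioi_mem_nhds hs.1] with s' hs'
      exact heq l hl s' (le_of_lt hs')
    have := ((hasDerivAt_const s l).sub hID).congr_of_eventuallyEq hev
    simpa using this
  have hgderiv : ∀ s ∈ Ioo (0:ℝ) t,
      HasDerivAt (fun s => Real.exp (δ * s) * w s) (Real.exp (δ * s) * ψ (w s)) s := by
    intro s hs
    have he : HasDerivAt (fun s : ℝ => Real.exp (δ * s)) (Real.exp (δ * s) * δ) s := by
      have h0 : HasDerivAt (fun s : ℝ => δ * s) δ s := by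
        simpa using (hasDerivAt_id s).const_mul δ
      exact h0.exp
    have hprod := he.mul (hwderiv s hs)
    exact hprod.congr_deriv (by
      rw [hψφ (w s) (hwpos s (Ioo_subset_Icc_self hs))]
      ring)
  have hgcont : ContinuousOn (fun s => Real.exp (δ * s) * w s) (Icc 0 t) :=
    ((Real.continuous_exp.comp (continuous_const.mul continuous_id)).continuousOn).mul hwcont
  have hhcont : ContinuousOn (fun s => Real.exp (δ * s) * ψ (w s)) (Icc 0 t) := by
    have hcont2 : ContinuousOn
        (fun s => Real.exp (δ * s) * (δ * w s - φ (w s))) (Icc 0 t) :=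
      ((Real.continuous_exp.comp (continuous_const.mul continuous_id)).continuousOn).mul
        ((continuousOn_const.mul hwcont).sub hφw)
    exact hcont2.congr fun s hs => by rw [hψφ (w s) (hwpos s hs)]
  have hFTC : ∫ s in (0:ℝ)..t, Real.exp (δ * s) * ψ (w s)
      = Real.exp (δ * t) * w t - Real.exp (δ * 0) * w 0 :=
    intervalIntegral.integral_eq_sub_of_hasDeriv_right_of_le ht hgcont
      (fun s hs => (hgderiv s hs).hasDerivWithinAt)
      (hhcont.intervalIntegrable_of_Icc ht)
  have hw0 : w 0 = l := by
    have := heq l hl 0 le_rfl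
    simpa using this
  have hIeq : ∫ s in (0:ℝ)..t, Real.exp (δ * s) * ψ (w s)
      = Real.exp (δ * t) * w t - l := by
    rw [hFTC, hw0]
    simp
  have hcv : ∫ s in (0:ℝ)..t, Real.exp (-δ * s) * ψ (w (t - s))
      = Real.exp (-(δ * t)) * ∫ s in (0:ℝ)..t, Real.exp (δ * s) * ψ (w s) := by
    have hstep : ∀ s : ℝ, Real.exp (-δ * s) * ψ (w (t - s))
        = Real.exp (-(δ * t)) * (Real.exp (δ * (t - s)) * ψ (w (t - s))) := by
      intro s
      rw [show -δ * s = -(δ * t) + δ * (t - s) by ring, Real.exp_add]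
      ring
    rw [intervalIntegral.integral_congr
      (g := fun s => Real.exp (-(δ * t)) * (Real.exp (δ * (t - s)) * ψ (w (t - s))))
      (fun s _ => hstep s)]
    rw [intervalIntegral.integral_const_mul]
    congr 1
    have := intervalIntegral.integral_comp_sub_left
      (a := (0:ℝ)) (b := t) (fun x => Real.exp (δ * x) * ψ (w x)) t
    simpa using this
  have hee : Real.exp (-(δ * t)) * Real.exp (δ * t) = 1 := by
    rw [← Real.exp_add]
    simp
  show w t = Real.exp (-δ * t) * l +
      ∫ s in (0:ℝ)..t, Real.exp (-δ * s) * ψ (w (t - s))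
  rw [hcv, hIeq, show -δ * t = -(δ * t) by ring]
  linear_combination (-(w t)) * hee
end
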